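/- arXiv:2402.04669 — 3 statements merged into one kernel-verified Lean document; each statement's English description precedes it below -/
import Mathlib

section
/- For all a, b ∈ (1/4, 1/2) there exists a constant C > 0 (depending only on a and b) such that for all α, β ∈ ℝ one has ∫_ℝ ⟨x−α⟩^{−2a} ⟨x−β⟩^{−2b} dx ≤ C ⟨α−β⟩^{−(2a+2b−1)}. -/
open MeasureTheory Real Set

noncomputable section

/-- Japanese bracket `⟨c⟩ = 1 + |c|`. -/
def jb (c : ℝ) : ℝ := 1 + |c|

open Filter intervalIntegral

lemma jb_pos (c : ℝ) : 0 < jb c := by unfold jb; positivity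

lemma jb_neg (c : ℝ) : jb (-c) = jb c := by unfold jb; rw [abs_neg]

lemma jb_integrable {p : ℝ} (hp : 1 < p) (c : ℝ) :
    Integrable (fun x : ℝ => jb (x - c) ^ (-p)) := by
  have h : Integrable (fun x : ℝ => (1 + ‖x‖) ^ (-p)) (volume : Measure ℝ) := by
    apply integrable_one_add_norm
    simpa using hp
  have h2 := h.comp_sub_right c
  simpa [jb, Real.norm_eq_abs] using h2

lemma jb_cont (c s : ℝ) : Continuous (fun x : ℝ => jb (x - c) ^ s) := by
  apply Continuous.rpow_const
  · unfold jb; fun_prop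
  · intro x; exact Or.inl (jb_pos _).ne'

lemma base_eval {s : ℝ} (hs : s < 1) (d : ℝ) (hd : 0 ≤ d) :
    ∫ x in (0:ℝ)..d, (1 + x) ^ (-s) = ((1 + d) ^ (1 - s) - 1) / (1 - s) := by
  have h1 : (∫ x in (0:ℝ)..d, (1 + x) ^ (-s)) = ∫ x in (0+1:ℝ)..(d+1), x ^ (-s) := by
    rw [← intervalIntegral.integral_comp_add_right (fun x => x ^ (-s)) 1]
    simp [add_comm]
  rw [h1, integral_rpow (Or.inl (by linarith : (-1:ℝ) < -s))]
  norm_num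
  rw [show -s+1 = 1-s by ring, show d+1 = 1+d by ring]

lemma near_eval {s : ℝ} (hs0 : 0 < s) (hs : s < 1) (d : ℝ) (hd : 0 ≤ d) :
    ∫ x in (-d)..d, jb x ^ (-s) ≤ 2 * (1 + d) ^ (1 - s) / (1 - s) := by
  have hint : ∀ u v : ℝ, IntervalIntegrable (fun x : ℝ => jb x ^ (-s)) volume u v := by
    intro u v
    apply Continuous.intervalIntegrable
    apply Continuous.rpow_const
    · unfold jb; fun_prop
    · intro x; exact Or.inl (jb_pos _).ne'
  have hsplit : (∫ x in (-d)..d, jb x ^ (-s)) =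
      (∫ x in (-d)..(0:ℝ), jb x ^ (-s)) + ∫ x in (0:ℝ)..d, jb x ^ (-s) :=
    (intervalIntegral.integral_add_adjacent_intervals (hint _ _) (hint _ _)).symm
  have hright : (∫ x in (0:ℝ)..d, jb x ^ (-s)) = ((1 + d) ^ (1 - s) - 1) / (1 - s) := by
    rw [← base_eval hs d hd]
    apply intervalIntegral.integral_congr
    intro x hx
    rw [uIcc_of_le hd] at hx
    simp [jb, abs_of_nonneg hx.1]
  have hleft : (∫ x in (-d)..(0:ℝ), jb x ^ (-s)) = ((1 + d) ^ (1 - s) - 1) / (1 - s) := by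
    have h2 : (∫ x in (-d)..(0:ℝ), jb x ^ (-s)) = ∫ x in (-d)..(0:ℝ), jb (-x) ^ (-s) := by
      apply intervalIntegral.integral_congr
      intro x hx
      simp [jb, abs_neg]
    rw [h2, intervalIntegral.integral_comp_neg (fun x => jb x ^ (-s))]
    simp only [neg_zero, neg_neg]
    rw [hright]
  rw [hsplit, hright, hleft]
  have h3 : (0:ℝ) < 1 - s := by linarith
  have h4 : (1:ℝ) ≤ (1 + d) ^ (1 - s) := Real.one_le_rpow (by linarith) (by linarith)
  rw [← add_div, div_le_div_iff₀ h3 h3]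
  nlinarith

lemma tail_eval {p : ℝ} (hp : 1 < p) (c e : ℝ) (he : 0 ≤ e) :
    ∫ x in Ioi (c + e), jb (x - c) ^ (-p) = (1 + e) ^ (1 - p) / (p - 1) := by
  have hcong : ∀ x ∈ Ioi (c + e), jb (x - c) ^ (-p) = (1 + (x - c)) ^ (-p) := by
    intro x hx
    unfold jb
    rw [abs_of_nonneg (by simp only [mem_Ioi] at hx; linarith)]
  rw [setIntegral_congr_fun measurableSet_Ioi hcong]
  have hint : Integrable (fun x : ℝ => jb (x - c) ^ (-p)) := by
    have h : Integrable (fun x : ℝ => (1 + ‖x‖) ^ (-p)) (volume : Measure ℝ) := by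
      apply integrable_one_add_norm; simpa using hp
    simpa [jb, Real.norm_eq_abs] using h.comp_sub_right c
  have hIOn : IntegrableOn (fun x : ℝ => (1 + (x - c)) ^ (-p)) (Ioi (c + e)) :=
    (hint.integrableOn).congr_fun hcong measurableSet_Ioi
  have hderiv : ∀ x ∈ Ici (c + e),
      HasDerivAt (fun x : ℝ => (1 + (x - c)) ^ (1 - p) / (1 - p)) ((1 + (x - c)) ^ (-p)) x := by
    intro x hx
    have hx0 : (0:ℝ) < 1 + (x - c) := by simp only [mem_Ici] at hx; linarith
    have hin : HasDerivAt (fun x : ℝ => 1 + (x - c)) 1 x := by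
      simpa using ((hasDerivAt_id x).sub_const c).const_add 1
    have hout := ((Real.hasDerivAt_rpow_const (p := 1 - p) (Or.inl hx0.ne')).comp x hin).div_const (1 - p)
    have h2 : (1 - p) * (1 + (x - c)) ^ (1 - p - 1) * 1 / (1 - p) = (1 + (x - c)) ^ (-p) := by
      rw [mul_one, show (1:ℝ) - p - 1 = -p by ring]
      exact mul_div_cancel_left₀ _ (by linarith : (1:ℝ) - p ≠ 0)
    exact h2 ▸ hout
  have htend : Tendsto (fun x : ℝ => (1 + (x - c)) ^ (1 - p) / (1 - p)) atTop (nhds 0) := by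
    have h1 : Tendsto (fun x : ℝ => 1 + (x - c)) atTop atTop := by
      apply tendsto_atTop_add_const_left
      exact tendsto_atTop_add_const_right atTop (-c) tendsto_id
    have h2 : Tendsto (fun y : ℝ => y ^ (1 - p)) atTop (nhds 0) := by
      rw [show (1:ℝ) - p = -(p - 1) by ring]
      exact tendsto_rpow_neg_atTop (by linarith)
    have := (h2.comp h1).div_const (1 - p)
    simpa using this
  rw [integral_Ioi_of_hasDerivAt_of_tendsto' hderiv hIOn htend]
  rw [show (1:ℝ) + (c + e - c) = 1 + e by ring]
  field_simp
  rw [zero_sub, ← neg_div, div_eq_div_iff (fun h => by linarith) (fun h => by linarith)]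
  ring

lemma half {s t : ℝ} (hs : s ∈ Ioo (1/2:ℝ) 1) (ht : t ∈ Ioo (1/2:ℝ) 1)
    (α β : ℝ) (A : Set ℝ) (hA : MeasurableSet A)
    (hAle : ∀ x ∈ A, |x - α| ≤ |x - β|) :
    ∫ x in A, jb (x - α) ^ (-s) * jb (x - β) ^ (-t) ≤
      (2 ^ (t + 1) / (1 - s) + 2 / (s + t - 1)) * jb (α - β) ^ (-(s + t - 1)) := by
  obtain ⟨hs1, hs2⟩ := hs
  obtain ⟨ht1, ht2⟩ := ht
  have hp : 1 < s + t := by linarith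
  set d : ℝ := |α - β| with hd_def
  have hd : 0 ≤ d := abs_nonneg _
  set D : ℝ := jb (α - β) with hD_def
  have hD : D = 1 + d := rfl
  have hD0 : 0 < D := jb_pos _
  have hD1 : 1 ≤ D := by rw [hD]; linarith
  set f : ℝ → ℝ := fun x => jb (x - α) ^ (-s) * jb (x - β) ^ (-t) with hf_def
  set g1 : ℝ → ℝ := fun x => (2 ^ t * D ^ (-t)) * jb (x - α) ^ (-s) with hg1_def
  set g2 : ℝ → ℝ := fun x => jb (x - α) ^ (-(s + t)) with hg2_def
  have hfnn : ∀ x, 0 ≤ f x := fun x => by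
    simp only [hf_def, jb]; positivity
  have hg1nn : ∀ x, 0 ≤ g1 x := fun x => by
    simp only [hg1_def, jb]; positivity
  have hg2nn : ∀ x, 0 ≤ g2 x := fun x => by
    simp only [hg2_def, jb]; positivity
  -- pointwise bounds on A
  have hbeta : ∀ x ∈ A, D / 2 ≤ jb (x - β) := by
    intro x hx
    have h1 : |α - β| ≤ |x - β| + |x - α| := by
      calc |α - β| = |(x - β) - (x - α)| := by congr 1; ring
        _ ≤ |x - β| + |x - α| := abs_sub _ _
    have h2 := hAle x hx
    have : jb (x - β) = 1 + |x - β| := rfl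
    rw [hD, this]
    linarith
  have hf_le_g1 : ∀ x ∈ A, f x ≤ g1 x := by
    intro x hx
    have h1 : jb (x - β) ^ (-t) ≤ (D / 2) ^ (-t) :=
      Real.rpow_le_rpow_of_nonpos (by positivity) (hbeta x hx) (by linarith)
    have h2 : (D / 2) ^ (-t) = 2 ^ t * D ^ (-t) := by
      rw [Real.div_rpow hD0.le (by norm_num : (0:ℝ) ≤ 2),
        Real.rpow_neg (by norm_num : (0:ℝ) ≤ 2), div_eq_mul_inv, inv_inv, mul_comm]
    calc f x ≤ jb (x - α) ^ (-s) * (2 ^ t * D ^ (-t)) := by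
          rw [hf_def]
          exact mul_le_mul_of_nonneg_left (h2 ▸ h1) (Real.rpow_nonneg (jb_pos _).le _)
      _ = g1 x := by rw [hg1_def]; ring
  have hf_le_g2 : ∀ x ∈ A, f x ≤ g2 x := by
    intro x hx
    have hjble : jb (x - α) ≤ jb (x - β) := by
      have := hAle x hx
      show 1 + |x - α| ≤ 1 + |x - β|
      linarith
    have h1 : jb (x - β) ^ (-t) ≤ jb (x - α) ^ (-t) :=
      Real.rpow_le_rpow_of_nonpos (jb_pos _) hjble (by linarith)
    calc f x ≤ jb (x - α) ^ (-s) * jb (x - α) ^ (-t) :=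
          mul_le_mul_of_nonneg_left h1 (Real.rpow_nonneg (jb_pos _).le _)
      _ = g2 x := by
          rw [hg2_def, ← Real.rpow_add (jb_pos _)]
          congr 1
          ring
  -- integrability
  have hg2int : Integrable g2 := jb_integrable hp α
  have hfcont : Continuous f := (jb_cont α (-s)).mul (jb_cont β (-t))
  have hfA : IntegrableOn f A := by
    apply Integrable.mono hg2int.integrableOn (hfcont.aestronglyMeasurable.restrict)
    filter_upwards [ae_restrict_mem hA] with x hx
    rw [Real.norm_eq_abs, Real.norm_eq_abs, abs_of_nonneg (hfnn x),
      abs_of_nonneg (hg2nn x)]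
    exact hf_le_g2 x hx
  set E : Set ℝ := Icc (α - d) (α + d) with hE_def
  have hE : MeasurableSet E := measurableSet_Icc
  have hg1E : IntegrableOn g1 E := by
    apply Continuous.integrableOn_Icc
    exact continuous_const.mul (jb_cont α (-s))
  -- near bound
  have hnear : ∫ x in E, jb (x - α) ^ (-s) ≤ 2 * D ^ (1 - s) / (1 - s) := by
    have heq : ∫ x in E, jb (x - α) ^ (-s) = ∫ x in (-d)..d, jb x ^ (-s) := by
      rw [hE_def, integral_Icc_eq_integral_Ioc,
        ← intervalIntegral.integral_of_le (by linarith : α - d ≤ α + d),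
        intervalIntegral.integral_comp_sub_right (fun x => jb x ^ (-s)) α,
        show α - d - α = -d by ring, show α + d - α = d by ring]
    rw [heq, hD]
    exact near_eval (by linarith) hs2 d hd
  have bound1 : ∫ x in A ∩ E, f x ≤ (2 ^ t * D ^ (-t)) * (2 * D ^ (1 - s) / (1 - s)) := by
    calc ∫ x in A ∩ E, f x ≤ ∫ x in A ∩ E, g1 x :=
          setIntegral_mono_on (hfA.mono_set inter_subset_left)
            (hg1E.mono_set inter_subset_right) (hA.inter hE)
            (fun x hx => hf_le_g1 x hx.1)
      _ ≤ ∫ x in E, g1 x :=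
          setIntegral_mono_set hg1E (ae_of_all _ fun x => hg1nn x)
            (HasSubset.Subset.eventuallyLE inter_subset_right)
      _ = (2 ^ t * D ^ (-t)) * ∫ x in E, jb (x - α) ^ (-s) := by
          rw [hg1_def]; exact integral_const_mul _ _
      _ ≤ _ := mul_le_mul_of_nonneg_left hnear (by positivity)
  -- tail bound
  have htail_Ioi : ∫ x in Ioi (α + d), g2 x = D ^ (1 - (s + t)) / (s + t - 1) := by
    rw [hg2_def, tail_eval hp α d hd, hD]
  have htail_Iio : ∫ x in Iio (α - d), g2 x = D ^ (1 - (s + t)) / (s + t - 1) := by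
    calc ∫ x in Iio (α - d), g2 x
        = ∫ x in Iic (α - d), g2 x := integral_Iic_eq_integral_Iio.symm
      _ = ∫ x in Ioi (-α + d), g2 (-x) := by
          rw [show α - d = -(-α + d) by ring]
          exact (integral_comp_neg_Ioi _ _).symm
      _ = ∫ x in Ioi (-α + d), jb (x - (-α)) ^ (-(s + t)) := by
          apply setIntegral_congr_fun measurableSet_Ioi
          intro x _
          simp only [hg2_def]
          rw [show -x - α = -(x + α) by ring, jb_neg, show x + α = x - (-α) by ring]
      _ = D ^ (1 - (s + t)) / (s + t - 1) := by
          rw [tail_eval hp (-α) d hd, hD]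
  have bound2 : ∫ x in A \ E, f x ≤ 2 * (D ^ (1 - (s + t)) / (s + t - 1)) := by
    calc ∫ x in A \ E, f x ≤ ∫ x in A \ E, g2 x :=
          setIntegral_mono_on (hfA.mono_set diff_subset) hg2int.integrableOn
            (hA.diff hE) (fun x hx => hf_le_g2 x hx.1)
      _ ≤ ∫ x in Eᶜ, g2 x :=
          setIntegral_mono_set hg2int.integrableOn
            (ae_of_all _ fun x => hg2nn x)
            (HasSubset.Subset.eventuallyLE (fun x hx => hx.2))
      _ = (∫ x in Iio (α - d), g2 x) + ∫ x in Ioi (α + d), g2 x := by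
          rw [hE_def, show (Icc (α - d) (α + d))ᶜ = Iio (α - d) ∪ Ioi (α + d) by
            ext x
            simp only [mem_compl_iff, mem_Icc, mem_union, mem_Iio, mem_Ioi, not_and_or, not_le]]
          exact setIntegral_union
            (by
              rw [Set.disjoint_left]
              intro x hx hx'
              simp only [mem_Iio, mem_Ioi] at hx hx'
              linarith)
            measurableSet_Ioi hg2int.integrableOn hg2int.integrableOn
      _ = 2 * (D ^ (1 - (s + t)) / (s + t - 1)) := by
          rw [htail_Ioi, htail_Iio]; ring
  calc ∫ x in A, f x = (∫ x in A ∩ E, f x) + ∫ x in A \ E, f x :=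
        (integral_inter_add_diff hE hfA).symm
    _ ≤ (2 ^ t * D ^ (-t)) * (2 * D ^ (1 - s) / (1 - s)) +
        2 * (D ^ (1 - (s + t)) / (s + t - 1)) := add_le_add bound1 bound2
    _ = (2 ^ (t + 1) / (1 - s) + 2 / (s + t - 1)) * D ^ (-(s + t - 1)) := by
        have e1 : D ^ (-t) * D ^ (1 - s) = D ^ (-(s + t - 1)) := by
          rw [← Real.rpow_add hD0]; congr 1; ring
        have e2 : D ^ (1 - (s + t)) = D ^ (-(s + t - 1)) := by congr 1; ring
        have e3 : (2:ℝ) ^ (t + 1) = 2 ^ t * 2 :=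
          Real.rpow_add_one (by norm_num : (2:ℝ) ≠ 0) t
        rw [e2, e3, show (2:ℝ) ^ t * D ^ (-t) * (2 * D ^ (1 - s) / (1 - s)) =
          (2 ^ t * 2 / (1 - s)) * (D ^ (-t) * D ^ (1 - s)) by ring, e1]
        ring

/-- For all `a, b ∈ (1/4, 1/2)` there exists `C > 0` (depending only on `a`, `b`) such that
for all `α β : ℝ`, `∫ ⟨x-α⟩^{-2a} ⟨x-β⟩^{-2b} dx ≤ C ⟨α-β⟩^{-(2a+2b-1)}`. -/
theorem stmt0 (a b : ℝ) (ha : a ∈ Set.Ioo (1/4 : ℝ) (1/2)) (hb : b ∈ Set.Ioo (1/4 : ℝ) (1/2)) :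
    ∃ C : ℝ, 0 < C ∧ ∀ α β : ℝ,
      (∫ x : ℝ, jb (x - α) ^ (-(2 * a)) * jb (x - β) ^ (-(2 * b))) ≤
        C * jb (α - β) ^ (-(2 * a + 2 * b - 1)) := by
  obtain ⟨ha1, ha2⟩ := ha
  obtain ⟨hb1, hb2⟩ := hb
  have hs : (2*a) ∈ Ioo (1/2:ℝ) 1 := ⟨by linarith, by linarith⟩
  have ht : (2*b) ∈ Ioo (1/2:ℝ) 1 := ⟨by linarith, by linarith⟩
  have hp : 1 < 2*a + 2*b := by linarith
  refine ⟨(2 ^ (2*b + 1) / (1 - 2*a) + 2 / (2*a + 2*b - 1)) +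
    (2 ^ (2*a + 1) / (1 - 2*b) + 2 / (2*b + 2*a - 1)), ?_, ?_⟩
  · have p1 : (0:ℝ) < 2 ^ (2*b + 1) / (1 - 2*a) := by
      apply div_pos (by positivity) (by linarith)
    have p2 : (0:ℝ) < 2 / (2*a + 2*b - 1) := by
      apply div_pos (by norm_num) (by linarith)
    have p3 : (0:ℝ) < 2 ^ (2*a + 1) / (1 - 2*b) := by
      apply div_pos (by positivity) (by linarith)
    have p4 : (0:ℝ) < 2 / (2*b + 2*a - 1) := by
      apply div_pos (by norm_num) (by linarith)
    linarith
  intro α β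
  set A : Set ℝ := {x : ℝ | |x - α| ≤ |x - β|} with hA_def
  have hA : MeasurableSet A := by
    apply measurableSet_le
    · exact ((continuous_id.sub continuous_const).abs).measurable
    · exact ((continuous_id.sub continuous_const).abs).measurable
  have hint : Integrable (fun x : ℝ => jb (x - α) ^ (-(2 * a)) * jb (x - β) ^ (-(2 * b))) := by
    have hg : Integrable (fun x : ℝ =>
        jb (x - α) ^ (-(2*a + 2*b)) + jb (x - β) ^ (-(2*a + 2*b))) :=
      (jb_integrable hp α).add (jb_integrable hp β)
    apply Integrable.mono hg ((jb_cont α (-(2*a))).mul (jb_cont β (-(2*b)))).aestronglyMeasurable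
    apply ae_of_all
    intro x
    have hnn1 : (0:ℝ) ≤ jb (x - α) ^ (-(2 * a)) * jb (x - β) ^ (-(2 * b)) := by
      have := (jb_pos (x-α)).le
      have := (jb_pos (x-β)).le
      positivity
    have hnn2 : (0:ℝ) ≤ jb (x - α) ^ (-(2*a + 2*b)) + jb (x - β) ^ (-(2*a + 2*b)) := by
      have := (jb_pos (x-α)).le
      have := (jb_pos (x-β)).le
      positivity
    simp only [Real.norm_eq_abs, Pi.mul_apply]
    rw [abs_of_nonneg hnn1, abs_of_nonneg hnn2]
    rcases le_total (jb (x - α)) (jb (x - β)) with h | h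
    · have h1 : jb (x - β) ^ (-(2*b)) ≤ jb (x - α) ^ (-(2*b)) :=
        Real.rpow_le_rpow_of_nonpos (jb_pos _) h (by linarith)
      have h2 : jb (x - α) ^ (-(2*a)) * jb (x - α) ^ (-(2*b)) = jb (x - α) ^ (-(2*a + 2*b)) := by
        rw [← Real.rpow_add (jb_pos _)]; congr 1; ring
      have h3 : (0:ℝ) ≤ jb (x - β) ^ (-(2*a + 2*b)) := Real.rpow_nonneg (jb_pos _).le _
      nlinarith [Real.rpow_nonneg (jb_pos (x-α)).le (-(2*a)),
        mul_le_mul_of_nonneg_left h1 (Real.rpow_nonneg (jb_pos (x-α)).le (-(2*a)))]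
    · have h1 : jb (x - α) ^ (-(2*a)) ≤ jb (x - β) ^ (-(2*a)) :=
        Real.rpow_le_rpow_of_nonpos (jb_pos _) h (by linarith)
      have h2 : jb (x - β) ^ (-(2*a)) * jb (x - β) ^ (-(2*b)) = jb (x - β) ^ (-(2*a + 2*b)) := by
        rw [← Real.rpow_add (jb_pos _)]; congr 1; ring
      have h3 : (0:ℝ) ≤ jb (x - α) ^ (-(2*a + 2*b)) := Real.rpow_nonneg (jb_pos _).le _
      nlinarith [mul_le_mul_of_nonneg_right h1 (Real.rpow_nonneg (jb_pos (x-β)).le (-(2*b)))]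
  rw [← integral_add_compl hA hint]
  have h1 := half hs ht α β A hA (fun x hx => hx)
  have h2 := half ht hs β α Aᶜ hA.compl (fun x hx => le_of_not_ge hx)
  rw [show β - α = -(α - β) by ring, jb_neg,
    show -(2*b + 2*a - 1) = -(2*a + 2*b - 1) by ring] at h2
  have hcomm : (∫ x in Aᶜ, jb (x - α) ^ (-(2 * a)) * jb (x - β) ^ (-(2 * b))) =
      ∫ x in Aᶜ, jb (x - β) ^ (-(2 * b)) * jb (x - α) ^ (-(2 * a)) :=
    integral_congr_ae (Eventually.of_forall fun x => mul_comm _ _)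
  rw [add_mul]
  exact add_le_add h1 (hcomm ▸ h2)


end
end

section
/- Let a, b ∈ (1/4, 1/2) satisfy a + 2b > 1. Then sup over (ξ₁,τ₁) ∈ ℝ² with |ξ₁| ≥ 1 of ⟨τ₁−ξ₁³⟩^{−b} ( ∫_{D(ξ₁,τ₁)} ⟨τ−τ₁+(ξ−ξ₁)²⟩^{−2b} ⟨τ+ξ²⟩^{−2a} dξ dτ )^{1/2} is finite, where D(ξ₁,τ₁) = {(ξ,τ) ∈ ℝ² : ⟨τ₁−ξ₁³⟩ ≥ ⟨τ+ξ²⟩ and ⟨τ₁−ξ₁³⟩ ≥ ⟨τ−τ₁+(ξ−ξ₁)²⟩}. -/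
open MeasureTheory Real Set
open scoped ENNReal

noncomputable section

lemma aux1d (r p N c d : ℝ) (hr1 : 1 < r) (hrp : p ≤ r) (hd : 1 ≤ |d|)
    (φ : ℝ → ℝ) (hφ : ∀ t, φ t = c + d * t) :
    ∫⁻ t : ℝ, (if 1 + |φ t| ≤ N then ENNReal.ofReal ((1 + |φ t|) ^ (-p)) else 0)
      ≤ ENNReal.ofReal (N ^ (r - p)) * ∫⁻ x : ℝ, ENNReal.ofReal ((1 + |x|) ^ (-r)) := by
  have hd0 : d ≠ 0 := by intro h; rw [h] at hd; simp at hd; linarith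
  have key : ∀ t : ℝ, (if 1 + |φ t| ≤ N then ENNReal.ofReal ((1 + |φ t|) ^ (-p)) else 0)
      ≤ ENNReal.ofReal (N ^ (r - p)) * ENNReal.ofReal ((1 + |t + c / d|) ^ (-r)) := by
    intro t
    by_cases h : 1 + |φ t| ≤ N
    · have h1 : (0:ℝ) < 1 + |φ t| := by positivity
      have hN1 : (0:ℝ) < N := lt_of_lt_of_le h1 h
      rw [if_pos h, ← ENNReal.ofReal_mul (le_of_lt (Real.rpow_pos_of_pos hN1 _))]
      apply ENNReal.ofReal_le_ofReal
      have h2 : |t + c / d| ≤ |φ t| := by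
        have : φ t = d * (t + c / d) := by rw [hφ]; field_simp; ring
        rw [this, abs_mul]
        nlinarith [abs_nonneg (t + c / d)]
      calc (1 + |φ t|) ^ (-p) = (1 + |φ t|) ^ (r - p) * (1 + |φ t|) ^ (-r) := by
             rw [← Real.rpow_add h1]; ring_nf
        _ ≤ N ^ (r - p) * (1 + |t + c / d|) ^ (-r) := by
            apply mul_le_mul
            · exact Real.rpow_le_rpow (by positivity) h (by linarith)
            · apply Real.rpow_le_rpow_of_nonpos (by positivity) (by linarith) (by linarith)
            · positivity
            · positivity
    · rw [if_neg h]; exact zero_le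
  calc ∫⁻ t : ℝ, (if 1 + |φ t| ≤ N then ENNReal.ofReal ((1 + |φ t|) ^ (-p)) else 0)
      ≤ ∫⁻ t : ℝ, ENNReal.ofReal (N ^ (r - p)) * ENNReal.ofReal ((1 + |t + c / d|) ^ (-r)) :=
        lintegral_mono key
    _ = ENNReal.ofReal (N ^ (r - p)) * ∫⁻ t : ℝ, ENNReal.ofReal ((1 + |t + c / d|) ^ (-r)) := by
        apply lintegral_const_mul
        fun_prop
    _ = ENNReal.ofReal (N ^ (r - p)) * ∫⁻ x : ℝ, ENNReal.ofReal ((1 + |x|) ^ (-r)) := by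
        rw [lintegral_add_right_eq_self (fun x => ENNReal.ofReal ((1 + |x|) ^ (-r))) (c / d)]

/-- Region II estimate (for `|ξ₁| ≥ 1`) in the bilinear Schrödinger–KdV coupling estimate:
for `a, b ∈ (1/4,1/2)` with `a + 2b > 1`, the sup over `(ξ₁,τ₁)` with `|ξ₁| ≥ 1` of
`⟨τ₁-ξ₁³⟩^{-b} (∫_{D(ξ₁,τ₁)} ⟨τ-τ₁+(ξ-ξ₁)²⟩^{-2b} ⟨τ+ξ²⟩^{-2a} dξ dτ)^{1/2}` is finite,
where `D(ξ₁,τ₁)` consists of `(ξ,τ)` with `⟨τ₁-ξ₁³⟩ ≥ ⟨τ+ξ²⟩` and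
`⟨τ₁-ξ₁³⟩ ≥ ⟨τ-τ₁+(ξ-ξ₁)²⟩`. -/
theorem stmt3 (a b : ℝ) (ha : a ∈ Set.Ioo (1/4 : ℝ) (1/2)) (hb : b ∈ Set.Ioo (1/4 : ℝ) (1/2))
    (hab : 1 < a + 2 * b) :
    ∃ C : ℝ, ∀ ξ₁ τ₁ : ℝ, 1 ≤ |ξ₁| →
      jb (τ₁ - ξ₁ ^ 3) ^ (-b) *
        (∫ q : ℝ × ℝ in {q : ℝ × ℝ |
            jb (q.2 + q.1 ^ 2) ≤ jb (τ₁ - ξ₁ ^ 3) ∧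
            jb (q.2 - τ₁ + (q.1 - ξ₁) ^ 2) ≤ jb (τ₁ - ξ₁ ^ 3)},
          jb (q.2 - τ₁ + (q.1 - ξ₁) ^ 2) ^ (-(2 * b)) * jb (q.2 + q.1 ^ 2) ^ (-(2 * a))) ^ (1/2 : ℝ)
        ≤ C := by
  obtain ⟨ha1, ha2⟩ := ha
  obtain ⟨hb1, hb2⟩ := hb
  set r : ℝ := (1 + a + 2 * b) / 2 with hrdef
  have hr1 : 1 < r := by rw [hrdef]; linarith
  have hra : 2 * a ≤ r := by rw [hrdef]; linarith
  have hrb : 2 * b ≤ r := by rw [hrdef]; linarith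
  have hrab : r ≤ a + 2 * b := by rw [hrdef]; linarith
  set Cr : ℝ≥0∞ := ∫⁻ x : ℝ, ENNReal.ofReal ((1 + |x|) ^ (-r)) with hCrdef
  have hCrfin : Cr ≠ ⊤ := by
    have h := finite_integral_one_add_norm (E := ℝ) (μ := volume) (r := r)
      (by simpa using hr1)
    rw [hCrdef]
    simp only [Real.norm_eq_abs] at h
    exact h.ne
  set c : ℝ := Cr.toReal with hcdef
  have hc0 : 0 ≤ c := ENNReal.toReal_nonneg
  have hCr_eq : Cr = ENNReal.ofReal c := (ENNReal.ofReal_toReal hCrfin).symm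
  set K : ℝ := 2 * (2:ℝ) ^ r * (2:ℝ) ^ r * c * c with hKdef
  have hK0 : 0 ≤ K := by positivity
  refine ⟨K ^ (1/2 : ℝ), ?_⟩
  intro ξ₁ τ₁ hξ₁
  set M : ℝ := jb (τ₁ - ξ₁ ^ 3) with hMdef
  have hM1 : 1 ≤ M := by rw [hMdef]; unfold jb; simp [abs_nonneg]
  have hM0 : (0:ℝ) < M := by linarith
  set S : Set (ℝ × ℝ) := {q : ℝ × ℝ |
      jb (q.2 + q.1 ^ 2) ≤ M ∧ jb (q.2 - τ₁ + (q.1 - ξ₁) ^ 2) ≤ M} with hSdef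
  set f : ℝ × ℝ → ℝ := fun q =>
      jb (q.2 - τ₁ + (q.1 - ξ₁) ^ 2) ^ (-(2 * b)) * jb (q.2 + q.1 ^ 2) ^ (-(2 * a)) with hfdef
  -- auxiliary ENNReal-valued functions
  set w : ℝ → ℝ := fun ξ => (τ₁ - ξ₁ ^ 2) + (2 * ξ₁) * ξ with hwdef
  set g₁ : ℝ → ℝ≥0∞ := fun ξ =>
      if 1 + |w ξ| ≤ 2 * M then ENNReal.ofReal ((1 + |w ξ|) ^ (-(2 * b))) else 0 with hg₁def
  set g₂ : ℝ → ℝ≥0∞ := fun ξ =>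
      if 1 + |w ξ| ≤ 2 * M then ENNReal.ofReal ((1 + |w ξ|) ^ (-(2 * a))) else 0 with hg₂def
  set h₁ : ℝ × ℝ → ℝ≥0∞ := fun q =>
      if 1 + |q.2 + q.1 ^ 2| ≤ M then ENNReal.ofReal ((1 + |q.2 + q.1 ^ 2|) ^ (-(2 * a))) else 0
    with hh₁def
  set h₂ : ℝ × ℝ → ℝ≥0∞ := fun q =>
      if 1 + |q.2 - τ₁ + (q.1 - ξ₁) ^ 2| ≤ M then
        ENNReal.ofReal ((1 + |q.2 - τ₁ + (q.1 - ξ₁) ^ 2|) ^ (-(2 * b))) else 0 with hh₂def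
  -- measurability
  have mw : Measurable w := by fun_prop
  have mg₁ : Measurable g₁ := by
    apply Measurable.ite (measurableSet_le (by fun_prop) measurable_const) (by fun_prop)
      measurable_const
  have mg₂ : Measurable g₂ := by
    apply Measurable.ite (measurableSet_le (by fun_prop) measurable_const) (by fun_prop)
      measurable_const
  have mh₁ : Measurable h₁ := by
    apply Measurable.ite (measurableSet_le (by fun_prop) measurable_const) (by fun_prop)
      measurable_const
  have mh₂ : Measurable h₂ := by
    apply Measurable.ite (measurableSet_le (by fun_prop) measurable_const) (by fun_prop)
      measurable_const
  have mT : Measurable fun q : ℝ × ℝ =>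
      ENNReal.ofReal ((2:ℝ) ^ (2 * b)) * (g₁ q.1 * h₁ q)
      + ENNReal.ofReal ((2:ℝ) ^ (2 * a)) * (g₂ q.1 * h₂ q) :=
    ((measurable_const.mul ((mg₁.comp measurable_fst).mul mh₁)).add
      (measurable_const.mul ((mg₂.comp measurable_fst).mul mh₂)))
  have mf : Measurable f := by
    rw [hfdef]; unfold jb; fun_prop
  -- pointwise bound on S
  have hpt : ∀ q ∈ S, ENNReal.ofReal (f q) ≤
      ENNReal.ofReal ((2:ℝ) ^ (2 * b)) * (g₁ q.1 * h₁ q)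
      + ENNReal.ofReal ((2:ℝ) ^ (2 * a)) * (g₂ q.1 * h₂ q) := by
    rintro ⟨ξ, τ⟩ ⟨hu, hv⟩
    simp only [jb] at hu hv
    simp only [hfdef, jb]
    set u : ℝ := τ + ξ ^ 2 with hudef
    set v : ℝ := τ - τ₁ + (ξ - ξ₁) ^ 2 with hvdef
    have hwuv : w ξ = u - v := by rw [hwdef, hudef, hvdef]; ring
    have huu : (0:ℝ) < 1 + |u| := by positivity
    have hvv : (0:ℝ) < 1 + |v| := by positivity
    have hww : (0:ℝ) < 1 + |w ξ| := by positivity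
    have hw2M : 1 + |w ξ| ≤ 2 * M := by
      have := abs_sub_abs_le_abs_sub u v
      have h3 : |w ξ| ≤ |u| + |v| := by rw [hwuv]; exact (abs_sub u v)
      linarith
    rcases le_total (|u|) (|v|) with hcase | hcase
    · -- f ≤ 2^{2b} (1+|w|)^{-2b} (1+|u|)^{-2a}
      have hwv : 1 + |w ξ| ≤ 2 * (1 + |v|) := by
        have h3 : |w ξ| ≤ |u| + |v| := by rw [hwuv]; exact (abs_sub u v)
        linarith
      have hkey : (1 + |v|) ^ (-(2 * b)) ≤ (2:ℝ) ^ (2 * b) * (1 + |w ξ|) ^ (-(2 * b)) := by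
        have h4 : (1 + |w ξ|) / 2 ≤ 1 + |v| := by linarith
        have h5 : (1 + |v|) ^ (-(2 * b)) ≤ ((1 + |w ξ|) / 2) ^ (-(2 * b)) :=
          Real.rpow_le_rpow_of_nonpos (by positivity) h4 (by linarith)
        calc (1 + |v|) ^ (-(2 * b)) ≤ ((1 + |w ξ|) / 2) ^ (-(2 * b)) := h5
          _ = (2:ℝ) ^ (2 * b) * (1 + |w ξ|) ^ (-(2 * b)) := by
              rw [Real.div_rpow (le_of_lt hww) (by norm_num), Real.rpow_neg (by norm_num : (0:ℝ) ≤ 2)]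
              field_simp
    -- now conclude
      have hle : (1 + |v|) ^ (-(2 * b)) * (1 + |u|) ^ (-(2 * a)) ≤
          (2:ℝ) ^ (2 * b) * ((1 + |w ξ|) ^ (-(2 * b)) * (1 + |u|) ^ (-(2 * a))) := by
        calc (1 + |v|) ^ (-(2 * b)) * (1 + |u|) ^ (-(2 * a))
            ≤ ((2:ℝ) ^ (2 * b) * (1 + |w ξ|) ^ (-(2 * b))) * (1 + |u|) ^ (-(2 * a)) := by
              apply mul_le_mul_of_nonneg_right hkey (by positivity)
          _ = (2:ℝ) ^ (2 * b) * ((1 + |w ξ|) ^ (-(2 * b)) * (1 + |u|) ^ (-(2 * a))) := by ring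
      calc ENNReal.ofReal ((1 + |v|) ^ (-(2 * b)) * (1 + |u|) ^ (-(2 * a)))
          ≤ ENNReal.ofReal ((2:ℝ) ^ (2 * b) * ((1 + |w ξ|) ^ (-(2 * b)) * (1 + |u|) ^ (-(2 * a)))) :=
            ENNReal.ofReal_le_ofReal hle
        _ = ENNReal.ofReal ((2:ℝ) ^ (2 * b)) * (g₁ ξ * h₁ (ξ, τ)) := by
            rw [hg₁def, hh₁def]
            simp only [if_pos hw2M, if_pos hu, ← hudef]
            rw [ENNReal.ofReal_mul (by positivity), ENNReal.ofReal_mul (by positivity)]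
        _ ≤ _ := le_self_add
    · -- symmetric case
      have hwu : 1 + |w ξ| ≤ 2 * (1 + |u|) := by
        have h3 : |w ξ| ≤ |u| + |v| := by rw [hwuv]; exact (abs_sub u v)
        linarith
      have hkey : (1 + |u|) ^ (-(2 * a)) ≤ (2:ℝ) ^ (2 * a) * (1 + |w ξ|) ^ (-(2 * a)) := by
        have h4 : (1 + |w ξ|) / 2 ≤ 1 + |u| := by linarith
        have h5 : (1 + |u|) ^ (-(2 * a)) ≤ ((1 + |w ξ|) / 2) ^ (-(2 * a)) :=
          Real.rpow_le_rpow_of_nonpos (by positivity) h4 (by linarith)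
        calc (1 + |u|) ^ (-(2 * a)) ≤ ((1 + |w ξ|) / 2) ^ (-(2 * a)) := h5
          _ = (2:ℝ) ^ (2 * a) * (1 + |w ξ|) ^ (-(2 * a)) := by
              rw [Real.div_rpow (le_of_lt hww) (by norm_num), Real.rpow_neg (by norm_num : (0:ℝ) ≤ 2)]
              field_simp
      have hle : (1 + |v|) ^ (-(2 * b)) * (1 + |u|) ^ (-(2 * a)) ≤
          (2:ℝ) ^ (2 * a) * ((1 + |w ξ|) ^ (-(2 * a)) * (1 + |v|) ^ (-(2 * b))) := by
        calc (1 + |v|) ^ (-(2 * b)) * (1 + |u|) ^ (-(2 * a))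
            ≤ (1 + |v|) ^ (-(2 * b)) * ((2:ℝ) ^ (2 * a) * (1 + |w ξ|) ^ (-(2 * a))) := by
              apply mul_le_mul_of_nonneg_left hkey (by positivity)
          _ = (2:ℝ) ^ (2 * a) * ((1 + |w ξ|) ^ (-(2 * a)) * (1 + |v|) ^ (-(2 * b))) := by ring
      calc ENNReal.ofReal ((1 + |v|) ^ (-(2 * b)) * (1 + |u|) ^ (-(2 * a)))
          ≤ ENNReal.ofReal ((2:ℝ) ^ (2 * a) * ((1 + |w ξ|) ^ (-(2 * a)) * (1 + |v|) ^ (-(2 * b)))) :=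
            ENNReal.ofReal_le_ofReal hle
        _ = ENNReal.ofReal ((2:ℝ) ^ (2 * a)) * (g₂ ξ * h₂ (ξ, τ)) := by
            rw [hg₂def, hh₂def]
            simp only [if_pos hw2M, if_pos hv, ← hvdef]
            rw [ENNReal.ofReal_mul (by positivity), ENNReal.ofReal_mul (by positivity)]
        _ ≤ _ := le_add_self
  -- 1D integral bounds
  have hd2 : (1:ℝ) ≤ |2 * ξ₁| := by
    rw [abs_mul]
    have : |(2:ℝ)| = 2 := by norm_num
    rw [this]; linarith
  have inner1 : ∀ ξ : ℝ, ∫⁻ τ : ℝ, h₁ (ξ, τ) ≤ ENNReal.ofReal (M ^ (r - 2 * a)) * Cr := by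
    intro ξ
    simp only [hh₁def]
    exact aux1d r (2 * a) M (ξ ^ 2) 1 hr1 hra (by norm_num) (fun τ => τ + ξ ^ 2)
      (fun t => by ring)
  have inner2 : ∀ ξ : ℝ, ∫⁻ τ : ℝ, h₂ (ξ, τ) ≤ ENNReal.ofReal (M ^ (r - 2 * b)) * Cr := by
    intro ξ
    simp only [hh₂def]
    exact aux1d r (2 * b) M ((ξ - ξ₁) ^ 2 - τ₁) 1 hr1 hrb (by norm_num)
      (fun τ => τ - τ₁ + (ξ - ξ₁) ^ 2) (fun t => by ring)
  have hg₁int : ∫⁻ ξ : ℝ, g₁ ξ ≤ ENNReal.ofReal ((2 * M) ^ (r - 2 * b)) * Cr := by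
    simp only [hg₁def]
    exact aux1d r (2 * b) (2 * M) (τ₁ - ξ₁ ^ 2) (2 * ξ₁) hr1 hrb hd2 w (fun t => rfl)
  have hg₂int : ∫⁻ ξ : ℝ, g₂ ξ ≤ ENNReal.ofReal ((2 * M) ^ (r - 2 * a)) * Cr := by
    simp only [hg₂def]
    exact aux1d r (2 * a) (2 * M) (τ₁ - ξ₁ ^ 2) (2 * ξ₁) hr1 hra hd2 w (fun t => rfl)
  -- Tonelli bounds
  have T1bound : ∫⁻ q : ℝ × ℝ, g₁ q.1 * h₁ q ≤
      (ENNReal.ofReal ((2 * M) ^ (r - 2 * b)) * Cr) * (ENNReal.ofReal (M ^ (r - 2 * a)) * Cr) := by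
    calc ∫⁻ q : ℝ × ℝ, g₁ q.1 * h₁ q = ∫⁻ ξ : ℝ, ∫⁻ τ : ℝ, g₁ (ξ, τ).1 * h₁ (ξ, τ) := by
          rw [Measure.volume_eq_prod]
          exact lintegral_prod _ ((mg₁.comp measurable_fst).mul mh₁).aemeasurable
      _ = ∫⁻ ξ : ℝ, g₁ ξ * ∫⁻ τ : ℝ, h₁ (ξ, τ) := by
          congr 1; funext ξ
          exact lintegral_const_mul (f := fun τ => h₁ (ξ, τ)) (g₁ ξ) (mh₁.comp measurable_prodMk_left)
      _ ≤ ∫⁻ ξ : ℝ, g₁ ξ * (ENNReal.ofReal (M ^ (r - 2 * a)) * Cr) :=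
          lintegral_mono fun ξ => mul_le_mul_right (inner1 ξ) _
      _ = (∫⁻ ξ : ℝ, g₁ ξ) * (ENNReal.ofReal (M ^ (r - 2 * a)) * Cr) :=
          lintegral_mul_const _ mg₁
      _ ≤ _ := mul_le_mul_left hg₁int _
  have T2bound : ∫⁻ q : ℝ × ℝ, g₂ q.1 * h₂ q ≤
      (ENNReal.ofReal ((2 * M) ^ (r - 2 * a)) * Cr) * (ENNReal.ofReal (M ^ (r - 2 * b)) * Cr) := by
    calc ∫⁻ q : ℝ × ℝ, g₂ q.1 * h₂ q = ∫⁻ ξ : ℝ, ∫⁻ τ : ℝ, g₂ (ξ, τ).1 * h₂ (ξ, τ) := by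
          rw [Measure.volume_eq_prod]
          exact lintegral_prod _ ((mg₂.comp measurable_fst).mul mh₂).aemeasurable
      _ = ∫⁻ ξ : ℝ, g₂ ξ * ∫⁻ τ : ℝ, h₂ (ξ, τ) := by
          congr 1; funext ξ
          exact lintegral_const_mul (f := fun τ => h₂ (ξ, τ)) (g₂ ξ) (mh₂.comp measurable_prodMk_left)
      _ ≤ ∫⁻ ξ : ℝ, g₂ ξ * (ENNReal.ofReal (M ^ (r - 2 * b)) * Cr) :=
          lintegral_mono fun ξ => mul_le_mul_right (inner2 ξ) _
      _ = (∫⁻ ξ : ℝ, g₂ ξ) * (ENNReal.ofReal (M ^ (r - 2 * b)) * Cr) :=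
          lintegral_mul_const _ mg₂
      _ ≤ _ := mul_le_mul_left hg₂int _
  -- assemble lintegral bound
  have hS' : ∫⁻ q in S, ENNReal.ofReal (f q) ≤
      ENNReal.ofReal ((2:ℝ) ^ (2 * b)) *
        ((ENNReal.ofReal ((2 * M) ^ (r - 2 * b)) * Cr) * (ENNReal.ofReal (M ^ (r - 2 * a)) * Cr))
      + ENNReal.ofReal ((2:ℝ) ^ (2 * a)) *
        ((ENNReal.ofReal ((2 * M) ^ (r - 2 * a)) * Cr) * (ENNReal.ofReal (M ^ (r - 2 * b)) * Cr)) := by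
    calc ∫⁻ q in S, ENNReal.ofReal (f q)
        ≤ ∫⁻ q in S, (ENNReal.ofReal ((2:ℝ) ^ (2 * b)) * (g₁ q.1 * h₁ q)
            + ENNReal.ofReal ((2:ℝ) ^ (2 * a)) * (g₂ q.1 * h₂ q)) :=
          setLIntegral_mono mT hpt
      _ ≤ ∫⁻ q : ℝ × ℝ, (ENNReal.ofReal ((2:ℝ) ^ (2 * b)) * (g₁ q.1 * h₁ q)
            + ENNReal.ofReal ((2:ℝ) ^ (2 * a)) * (g₂ q.1 * h₂ q)) :=
          setLIntegral_le_lintegral _ _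
      _ = (∫⁻ q : ℝ × ℝ, ENNReal.ofReal ((2:ℝ) ^ (2 * b)) * (g₁ q.1 * h₁ q))
            + ∫⁻ q : ℝ × ℝ, ENNReal.ofReal ((2:ℝ) ^ (2 * a)) * (g₂ q.1 * h₂ q) :=
          lintegral_add_left (measurable_const.mul ((mg₁.comp measurable_fst).mul mh₁)) _
      _ = ENNReal.ofReal ((2:ℝ) ^ (2 * b)) * (∫⁻ q : ℝ × ℝ, g₁ q.1 * h₁ q)
            + ENNReal.ofReal ((2:ℝ) ^ (2 * a)) * ∫⁻ q : ℝ × ℝ, g₂ q.1 * h₂ q := by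
          rw [lintegral_const_mul (f := fun q : ℝ × ℝ => g₁ q.1 * h₁ q) _
              ((mg₁.comp measurable_fst).mul mh₁),
            lintegral_const_mul (f := fun q : ℝ × ℝ => g₂ q.1 * h₂ q) _
              ((mg₂.comp measurable_fst).mul mh₂)]
      _ ≤ _ := add_le_add (mul_le_mul_right T1bound _) (mul_le_mul_right T2bound _)
  -- convert to a real bound
  set R : ℝ := (2:ℝ) ^ (2 * b) * (((2 * M) ^ (r - 2 * b) * c) * (M ^ (r - 2 * a) * c))
      + (2:ℝ) ^ (2 * a) * (((2 * M) ^ (r - 2 * a) * c) * (M ^ (r - 2 * b) * c)) with hRdef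
  have hR0 : 0 ≤ R := by rw [hRdef]; positivity
  have hRENN : ENNReal.ofReal ((2:ℝ) ^ (2 * b)) *
        ((ENNReal.ofReal ((2 * M) ^ (r - 2 * b)) * Cr) * (ENNReal.ofReal (M ^ (r - 2 * a)) * Cr))
      + ENNReal.ofReal ((2:ℝ) ^ (2 * a)) *
        ((ENNReal.ofReal ((2 * M) ^ (r - 2 * a)) * Cr) * (ENNReal.ofReal (M ^ (r - 2 * b)) * Cr))
      = ENNReal.ofReal R := by
    rw [hCr_eq, hRdef]
    rw [← ENNReal.ofReal_mul (by positivity), ← ENNReal.ofReal_mul (by positivity),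
      ← ENNReal.ofReal_mul (by positivity), ← ENNReal.ofReal_mul (by positivity),
      ← ENNReal.ofReal_mul (by positivity), ← ENNReal.ofReal_mul (by positivity),
      ← ENNReal.ofReal_mul (by positivity), ← ENNReal.ofReal_mul (by positivity),
      ← ENNReal.ofReal_add (by positivity) (by positivity)]
  have hf0 : ∀ q : ℝ × ℝ, 0 ≤ f q := by
    intro q; simp only [hfdef]; unfold jb; positivity
  have hint_eq : ∫ q in S, f q = (∫⁻ q in S, ENNReal.ofReal (f q)).toReal :=
    integral_eq_lintegral_of_nonneg_ae (ae_of_all _ hf0) mf.aestronglyMeasurable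
  have hIle : ∫ q in S, f q ≤ R := by
    rw [hint_eq]
    exact ENNReal.toReal_le_of_le_ofReal hR0 (hRENN ▸ hS')
  have hI0 : (0:ℝ) ≤ ∫ q in S, f q := integral_nonneg hf0
  -- real arithmetic endgame
  have hA : (2 * M) ^ (r - 2 * b) = 2 ^ (r - 2 * b) * M ^ (r - 2 * b) :=
    Real.mul_rpow (by norm_num) (le_of_lt hM0)
  have hA' : (2 * M) ^ (r - 2 * a) = 2 ^ (r - 2 * a) * M ^ (r - 2 * a) :=
    Real.mul_rpow (by norm_num) (le_of_lt hM0)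
  have hMM : M ^ (r - 2 * a) * M ^ (r - 2 * b) = M ^ ((r - 2 * a) + (r - 2 * b)) :=
    (Real.rpow_add hM0 _ _).symm
  have hRK : R ≤ K * M ^ ((r - 2 * a) + (r - 2 * b)) := by
    have h2b : (2:ℝ) ^ (2 * b) ≤ 2 ^ r := Real.rpow_le_rpow_of_exponent_le one_le_two hrb
    have h2a : (2:ℝ) ^ (2 * a) ≤ 2 ^ r := Real.rpow_le_rpow_of_exponent_le one_le_two hra
    have h2rb : (2:ℝ) ^ (r - 2 * b) ≤ 2 ^ r :=
      Real.rpow_le_rpow_of_exponent_le one_le_two (by linarith)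
    have h2ra : (2:ℝ) ^ (r - 2 * a) ≤ 2 ^ r :=
      Real.rpow_le_rpow_of_exponent_le one_le_two (by linarith)
    calc R = (2:ℝ) ^ (2 * b) * ((2 ^ (r - 2 * b) * M ^ (r - 2 * b) * c) * (M ^ (r - 2 * a) * c))
          + (2:ℝ) ^ (2 * a) * ((2 ^ (r - 2 * a) * M ^ (r - 2 * a) * c) * (M ^ (r - 2 * b) * c)) := by
          rw [hRdef, hA, hA']
      _ ≤ (2:ℝ) ^ r * ((2 ^ r * M ^ (r - 2 * b) * c) * (M ^ (r - 2 * a) * c))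
          + (2:ℝ) ^ r * ((2 ^ r * M ^ (r - 2 * a) * c) * (M ^ (r - 2 * b) * c)) := by
          gcongr
      _ = K * (M ^ (r - 2 * a) * M ^ (r - 2 * b)) := by rw [hKdef]; ring
      _ = K * M ^ ((r - 2 * a) + (r - 2 * b)) := by rw [hMM]
  have hIle2 : ∫ q in S, f q ≤ K * M ^ ((r - 2 * a) + (r - 2 * b)) := le_trans hIle hRK
  have hexp : -b + ((r - 2 * a) + (r - 2 * b)) * (1/2 : ℝ) ≤ 0 := by linarith
  calc M ^ (-b) * (∫ q in S, f q) ^ (1/2 : ℝ)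
      ≤ M ^ (-b) * (K * M ^ ((r - 2 * a) + (r - 2 * b))) ^ (1/2 : ℝ) := by
        apply mul_le_mul_of_nonneg_left (Real.rpow_le_rpow hI0 hIle2 (by norm_num))
        positivity
    _ = K ^ (1/2 : ℝ) * M ^ (-b + ((r - 2 * a) + (r - 2 * b)) * (1/2 : ℝ)) := by
        rw [Real.mul_rpow hK0 (Real.rpow_nonneg (le_of_lt hM0) _),
          ← Real.rpow_mul (le_of_lt hM0), Real.rpow_add hM0]
        ring
    _ ≤ K ^ (1/2 : ℝ) * 1 := by
        apply mul_le_mul_of_nonneg_left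
          (Real.rpow_le_one_of_one_le_of_nonpos hM1 hexp) (by positivity)
    _ = K ^ (1/2 : ℝ) := mul_one _

end
end

section
/- Let a ∈ (1/4, 1/2) and b ∈ (1/3, 1/2) satisfy a + 2b > 4/3. Then sup_{(ξ₁,τ₁)∈ℝ²} ⟨−τ₁+ξ₁²⟩^{−b} ( ∫_{G(ξ₁,τ₁)} ξ² ⟨ξ³+(ξ−ξ₁)²−τ₁⟩^{−(2a+2b−1)} dξ )^{1/2} < ∞, where G(ξ₁,τ₁) = {ξ ∈ ℝ : there exists τ with ⟨−τ₁+ξ₁²⟩ ≥ ⟨τ−ξ³⟩ and ⟨−τ₁+ξ₁²⟩ ≥ ⟨τ−τ₁+(ξ−ξ₁)²⟩}. -/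
open MeasureTheory Real Set
open scoped ENNReal

set_option maxHeartbeats 1000000

noncomputable section

lemma cov {T : Set ℝ} (hT : MeasurableSet T) {φ D : ℝ → ℝ}
    (hd : ∀ ξ, HasDerivAt φ (D ξ) ξ) (hinj : InjOn φ T) (g : ℝ → ℝ≥0∞) :
    ∫⁻ ξ in T, ENNReal.ofReal |D ξ| * g (φ ξ) = ∫⁻ u in φ '' T, g u := by
  rw [lintegral_image_eq_lintegral_abs_det_fderiv_mul volume hT
    (fun x _ => ((hd x).hasFDerivAt.hasFDerivWithinAt)) hinj g]
  simp only [ContinuousLinearMap.det_toSpanSingleton]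

lemma ubound (s Y : ℝ) (hs0 : 0 < s) (hs1 : s < 1) (hY : 0 ≤ Y) :
    ∫⁻ u in Icc (-Y) Y, ENNReal.ofReal ((1+|u|)^(-s)) ≤
      ENNReal.ofReal (2 * (1+Y)^(1-s) / (1-s)) := by
  have hcont : Continuous (fun u : ℝ => (1+|u|)^(-s)) := by
    apply Continuous.rpow_const (by continuity)
    intro u; left; positivity
  have hval : (∫ x in (0:ℝ)..Y, (1+x)^(-s)) = ((1+Y)^(1-s) - 1)/(1-s) := by
    have h1 : (∫ x in (0:ℝ)..Y, (1+x)^(-s)) = ∫ x in (1:ℝ)..(1+Y), x^(-s) := by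
      simpa using intervalIntegral.integral_comp_add_left (a := (0:ℝ)) (b := Y)
        (fun x => x^(-s)) 1
    rw [h1, integral_rpow (Or.inl (by linarith))]
    rw [Real.one_rpow]
    ring_nf
  have piece2 : ∫⁻ u in Icc (0:ℝ) Y, ENNReal.ofReal ((1+|u|)^(-s)) =
      ENNReal.ofReal (((1+Y)^(1-s) - 1)/(1-s)) := by
    rw [← ofReal_integral_eq_lintegral_ofReal (hcont.integrableOn_Icc)
      (Filter.Eventually.of_forall (fun u => by positivity))]
    congr 1
    rw [setIntegral_congr_fun measurableSet_Icc
      (fun u hu => by simp only [abs_of_nonneg hu.1] : ∀ u ∈ Icc (0:ℝ) Y,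
        (fun u : ℝ => (1+|u|)^(-s)) u = (fun u : ℝ => (1+u)^(-s)) u)]
    rw [integral_Icc_eq_integral_Ioc, ← intervalIntegral.integral_of_le hY, hval]
  have piece1 : ∫⁻ u in Icc (-Y) (0:ℝ), ENNReal.ofReal ((1+|u|)^(-s)) =
      ENNReal.ofReal (((1+Y)^(1-s) - 1)/(1-s)) := by
    rw [← ofReal_integral_eq_lintegral_ofReal (hcont.integrableOn_Icc)
      (Filter.Eventually.of_forall (fun u => by positivity))]
    congr 1
    rw [setIntegral_congr_fun measurableSet_Icc
      (fun u hu => by simp only [abs_of_nonpos hu.2] : ∀ u ∈ Icc (-Y) (0:ℝ),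
        (fun u : ℝ => (1+|u|)^(-s)) u = (fun u : ℝ => (1+(-u))^(-s)) u)]
    rw [integral_Icc_eq_integral_Ioc, ← intervalIntegral.integral_of_le (by linarith)]
    have := intervalIntegral.integral_comp_neg (a := -Y) (b := (0:ℝ))
      (fun x => (1+x)^(-s))
    simp only [neg_zero, neg_neg] at this
    rw [this, hval]
  have hsplit : Icc (-Y) Y ⊆ Icc (-Y) 0 ∪ Icc 0 Y := by
    intro u hu
    rcases le_total u 0 with h | h
    · exact Or.inl ⟨hu.1, h⟩
    · exact Or.inr ⟨h, hu.2⟩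
  calc ∫⁻ u in Icc (-Y) Y, ENNReal.ofReal ((1+|u|)^(-s))
      ≤ ∫⁻ u in Icc (-Y) 0 ∪ Icc 0 Y, ENNReal.ofReal ((1+|u|)^(-s)) :=
        lintegral_mono_set hsplit
    _ ≤ (∫⁻ u in Icc (-Y) (0:ℝ), ENNReal.ofReal ((1+|u|)^(-s))) +
        ∫⁻ u in Icc (0:ℝ) Y, ENNReal.ofReal ((1+|u|)^(-s)) := lintegral_union_le _ _ _
    _ = ENNReal.ofReal (((1+Y)^(1-s) - 1)/(1-s)) + ENNReal.ofReal (((1+Y)^(1-s) - 1)/(1-s)) := by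
        rw [piece1, piece2]
    _ ≤ ENNReal.ofReal (2 * (1+Y)^(1-s) / (1-s)) := by
        rw [← ENNReal.ofReal_add]
        · apply ENNReal.ofReal_le_ofReal
          have h1 : (0:ℝ) < 1 - s := by linarith
          rw [← add_div, div_le_div_iff₀ h1 h1]
          have : (0:ℝ) ≤ (1+Y)^(1-s) := by positivity
          nlinarith
        all_goals
          · apply div_nonneg _ (by linarith)
            have : (1:ℝ) ≤ (1+Y)^(1-s) := Real.one_le_rpow (by linarith) (by linarith)
            linarith

section
variable (ξ₁ τ₁ : ℝ)

lemma phi_deriv : ∀ ξ : ℝ, HasDerivAt (fun ξ : ℝ => ξ^3 + (ξ - ξ₁)^2 - τ₁)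
    (3*ξ^2 + 2*(ξ - ξ₁)) ξ := by
  intro ξ
  have h1 : HasDerivAt (fun ξ : ℝ => ξ^3) (3*ξ^2) ξ := by
    simpa using hasDerivAt_pow 3 ξ
  have h2 : HasDerivAt (fun ξ : ℝ => (ξ - ξ₁)^2) (2*(ξ - ξ₁)) ξ := by
    have := ((hasDerivAt_id ξ).sub_const ξ₁).pow 2
    simpa [Pi.pow_def] using this
  simpa using (h1.add h2).sub_const τ₁

lemma inj_pieces :
    InjOn (fun ξ : ℝ => ξ^3 + (ξ - ξ₁)^2 - τ₁) (Iic ((-1 - Real.sqrt (max 0 (1+6*ξ₁)))/3)) ∧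
    InjOn (fun ξ : ℝ => ξ^3 + (ξ - ξ₁)^2 - τ₁)
      (Icc ((-1 - Real.sqrt (max 0 (1+6*ξ₁)))/3) ((-1 + Real.sqrt (max 0 (1+6*ξ₁)))/3)) ∧
    InjOn (fun ξ : ℝ => ξ^3 + (ξ - ξ₁)^2 - τ₁) (Ici ((-1 + Real.sqrt (max 0 (1+6*ξ₁)))/3)) := by
  set d := Real.sqrt (max 0 (1+6*ξ₁)) with hd_def
  have hd0 : 0 ≤ d := Real.sqrt_nonneg _
  have hd2 : d^2 = max 0 (1+6*ξ₁) := Real.sq_sqrt (le_max_left _ _)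
  have hdge : 1 + 6*ξ₁ ≤ d^2 := by rw [hd2]; exact le_max_right _ _
  set rm := (-1 - d)/3 with hrm
  set rp := (-1 + d)/3 with hrp
  have hrmrp : rm ≤ rp := by rw [hrm, hrp]; linarith
  have hcont : Continuous (fun ξ : ℝ => ξ^3 + (ξ - ξ₁)^2 - τ₁) := by continuity
  have hderiv : ∀ ξ : ℝ, deriv (fun ξ : ℝ => ξ^3 + (ξ - ξ₁)^2 - τ₁) ξ = 3*ξ^2 + 2*(ξ - ξ₁) :=
    fun ξ => (phi_deriv ξ₁ τ₁ ξ).deriv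
  have hfact : ∀ ξ : ℝ, 3*(ξ - rm)*(ξ - rp) + (d^2 - (1+6*ξ₁))/3 = 3*ξ^2 + 2*(ξ - ξ₁) := by
    intro ξ; rw [hrm, hrp]; ring
  refine ⟨?_, ?_, ?_⟩
  · apply (strictMonoOn_of_deriv_pos (convex_Iic rm) hcont.continuousOn ?_).injOn
    intro ξ hξ
    rw [interior_Iic] at hξ
    rw [hderiv, ← hfact]
    have h1 : ξ < rm := hξ
    nlinarith
  · apply (strictAntiOn_of_deriv_neg (convex_Icc rm rp) hcont.continuousOn ?_).injOn
    intro ξ hξ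
    rw [interior_Icc] at hξ
    have hlt : rm < rp := lt_trans hξ.1 hξ.2
    have hd0' : 0 < d := by rw [hrm, hrp] at hlt; linarith
    have heq : d^2 = 1 + 6*ξ₁ := by
      rcases max_choice 0 (1+6*ξ₁) with h | h
      · exfalso; have h0 : d^2 = 0 := hd2.trans h; nlinarith
      · rw [hd2, h]
    rw [hderiv, ← hfact, heq]
    have h1 : rm < ξ := hξ.1
    have h2 : ξ < rp := hξ.2
    nlinarith
  · apply (strictMonoOn_of_deriv_pos (convex_Ici rp) hcont.continuousOn ?_).injOn
    intro ξ hξ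
    rw [interior_Ici] at hξ
    rw [hderiv, ← hfact]
    have h1 : rp < ξ := hξ
    have : rm ≤ rp := hrmrp
    nlinarith

end

lemma badsq (ξ₁ τ₁ M : ℝ) (hM : M = 1 + |(-τ₁ + ξ₁^2)|) (ξ : ℝ)
    (hS : |ξ^3 + (ξ - ξ₁)^2 - τ₁| ≤ 2*(M-1))
    (hbad : |3*ξ^2 + 2*(ξ - ξ₁)| < ξ^2) :
    ξ^2 ≤ 4*M^((2:ℝ)/3) := by
  have habsM : |(-τ₁ + ξ₁^2)| = M - 1 := by rw [hM]; ring
  have hM1 : 1 ≤ M := by rw [hM]; linarith [abs_nonneg (-τ₁ + ξ₁^2)]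
  have hMexp : 1 ≤ M^((2:ℝ)/3) := Real.one_le_rpow hM1 (by norm_num)
  -- basic inequalities from |D| < ξ²
  have hb := abs_lt.1 hbad
  have hx1 : ξ^2 + ξ < ξ₁ := by nlinarith [hb.2]
  -- |ψ| ≥ |ξ|³ - ξ² where ψ = ξ³+ξ²-2ξξ₁
  have hpsi : |ξ|^3 - ξ^2 ≤ |ξ^3 + ξ^2 - 2*ξ*ξ₁| := by
    rcases le_or_gt 0 ξ with h | h
    · rcases eq_or_lt_of_le h with h0 | h0
      · nlinarith [abs_nonneg (ξ^3 + ξ^2 - 2*ξ*ξ₁)]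
      · have habs : |ξ| = ξ := abs_of_pos h0
        have : ξ^3 + ξ^2 - 2*ξ*ξ₁ < -(ξ^3) - ξ^2 := by nlinarith
        have hle : ξ^3 + ξ^2 ≤ |ξ^3 + ξ^2 - 2*ξ*ξ₁| := by
          rw [abs_sub_comm] at *
          calc ξ^3 + ξ^2 ≤ (2*ξ*ξ₁ - (ξ^3+ξ^2)) := by nlinarith
          _ ≤ |2*ξ*ξ₁ - (ξ^3 + ξ^2)| := le_abs_self _
        rw [habs]; nlinarith [sq_nonneg ξ]
    · have habs : |ξ| = -ξ := abs_of_neg h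
      have : -(ξ^3) - ξ^2 < ξ^3 + ξ^2 - 2*ξ*ξ₁ := by nlinarith
      rw [habs]
      calc (-ξ)^3 - ξ^2 ≤ ξ^3 + ξ^2 - 2*ξ*ξ₁ := by nlinarith
      _ ≤ |ξ^3 + ξ^2 - 2*ξ*ξ₁| := le_abs_self _
  -- |ψ| ≤ |φ| + (M-1) ≤ 3(M-1)
  have hphi : |ξ^3 + ξ^2 - 2*ξ*ξ₁| ≤ 3*(M-1) := by
    have heq : ξ^3 + ξ^2 - 2*ξ*ξ₁ = (ξ^3 + (ξ - ξ₁)^2 - τ₁) - (-τ₁ + ξ₁^2) := by ring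
    rw [heq]
    calc |(ξ^3 + (ξ - ξ₁)^2 - τ₁) - (-τ₁ + ξ₁^2)|
        ≤ |ξ^3 + (ξ - ξ₁)^2 - τ₁| + |(-τ₁ + ξ₁^2)| := abs_sub _ _
      _ ≤ 2*(M-1) + (M-1) := by rw [habsM]; linarith
      _ = 3*(M-1) := by ring
  -- conclude
  have hcube : |ξ|^3 ≤ ξ^2 + 3*(M-1) := by nlinarith
  rcases le_or_gt (|ξ|) 2 with h2 | h2
  · have : ξ^2 ≤ 4 := by nlinarith [abs_nonneg ξ, sq_abs ξ]
    nlinarith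
  · have hc6 : |ξ|^3 ≤ 6*M := by nlinarith [sq_abs ξ, abs_nonneg ξ]
    have hx0 : (0:ℝ) ≤ |ξ| := abs_nonneg ξ
    have key : ξ^2 = (|ξ|^3)^((2:ℝ)/3) := by
      have e1 : ((|ξ|^3 : ℝ))^((2:ℝ)/3) = |ξ|^((2:ℝ)) := by
        rw [← Real.rpow_natCast (|ξ|) 3, ← Real.rpow_mul hx0]
        norm_num
      have e2 : |ξ|^((2:ℝ)) = ξ^2 := by
        rw [show ((2:ℝ)) = ((2:ℕ):ℝ) by norm_num, Real.rpow_natCast, sq_abs]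
      rw [e1, e2]
    rw [key]
    calc (|ξ|^3)^((2:ℝ)/3) ≤ (6*M)^((2:ℝ)/3) := by
          apply Real.rpow_le_rpow (by positivity) hc6 (by norm_num)
      _ = 6^((2:ℝ)/3) * M^((2:ℝ)/3) := Real.mul_rpow (by norm_num) (by linarith)
      _ ≤ 4 * M^((2:ℝ)/3) := by
          have h3 : ((6:ℝ)^((2:ℝ)/3))^(3:ℕ) = 36 := by
            rw [← Real.rpow_natCast (6^((2:ℝ)/3)) 3, ← Real.rpow_mul (by norm_num)]
            norm_num
          have ht0 : (0:ℝ) ≤ (6:ℝ)^((2:ℝ)/3) :=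
            Real.rpow_nonneg (by norm_num) _
          have h4 : (6:ℝ)^((2:ℝ)/3) ≤ 4 := by
            set t := (6:ℝ)^((2:ℝ)/3) with htd
            nlinarith [sq_nonneg (t-4), sq_nonneg (t+4), sq_nonneg t]
          gcongr

lemma sublevel (ξ₁ H : ℝ) (hH : 0 ≤ H) :
    volume {ξ : ℝ | |3*ξ^2 + 2*(ξ - ξ₁)| < H} ≤ ENNReal.ofReal (2*Real.sqrt H) := by
  obtain ⟨c, hc⟩ : ∃ c : ℝ, c = 2*ξ₁ + 1/3 := ⟨_, rfl⟩
  obtain ⟨p, hp⟩ : ∃ p : ℝ, p = Real.sqrt (max 0 ((c - H)/3)) := ⟨_, rfl⟩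
  obtain ⟨q, hq⟩ : ∃ q : ℝ, q = Real.sqrt (max 0 ((c + H)/3)) := ⟨_, rfl⟩
  have hp0 : 0 ≤ p := hp ▸ Real.sqrt_nonneg _
  have hq0 : 0 ≤ q := hq ▸ Real.sqrt_nonneg _
  have hp2 : p^2 = max 0 ((c - H)/3) := by rw [hp]; exact Real.sq_sqrt (le_max_left _ _)
  have hq2 : q^2 = max 0 ((c + H)/3) := by rw [hq]; exact Real.sq_sqrt (le_max_left _ _)
  have hpq : p ≤ q := by
    rw [hp, hq]
    exact Real.sqrt_le_sqrt (max_le_max le_rfl (by linarith))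
  have hincl : {ξ : ℝ | |3*ξ^2 + 2*(ξ - ξ₁)| < H} ⊆
      Icc (-1/3 - q) (-1/3 - p) ∪ Icc (-1/3 + p) (-1/3 + q) := by
    intro ξ hξ
    simp only [mem_setOf_eq] at hξ
    have hb := abs_lt.1 hξ
    have hb1 := hb.1
    have hb2 := hb.2
    have htu : (ξ + 1/3)^2 < (c + H)/3 := by rw [hc]; nlinarith
    have htl : (c - H)/3 < (ξ + 1/3)^2 := by rw [hc]; nlinarith
    have habs_le : |ξ + 1/3| ≤ q := by
      rw [← Real.sqrt_sq_eq_abs, hq]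
      exact Real.sqrt_le_sqrt (le_max_of_le_right htu.le)
    have habs_ge : p ≤ |ξ + 1/3| := by
      rw [← Real.sqrt_sq_eq_abs, hp]
      exact Real.sqrt_le_sqrt (max_le (sq_nonneg _) htl.le)
    rcases le_or_gt 0 (ξ + 1/3) with h | h
    · right
      rw [abs_of_nonneg h] at habs_le habs_ge
      exact ⟨by linarith, by linarith⟩
    · left
      rw [abs_of_neg h] at habs_le habs_ge
      exact ⟨by linarith, by linarith⟩
  have hqp : q - p ≤ Real.sqrt H := by
    have hd : q^2 - p^2 ≤ H := by
      rw [hp2, hq2]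
      rcases le_or_gt ((c - H)/3) 0 with h | h
      · rw [max_eq_left h]
        rcases le_or_gt ((c + H)/3) 0 with h' | h'
        · rw [max_eq_left h']; linarith
        · rw [max_eq_right h'.le]; linarith
      · rw [max_eq_right h.le, max_eq_right (by linarith : (0:ℝ) ≤ (c + H)/3)]
        linarith
    have hsq : (q - p)^2 ≤ H := by nlinarith
    nlinarith [Real.sq_sqrt hH, Real.sqrt_nonneg H, sq_nonneg (q - p - Real.sqrt H),
      sq_nonneg (q - p + Real.sqrt H)]
  calc volume {ξ : ℝ | |3*ξ^2 + 2*(ξ - ξ₁)| < H}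
      ≤ volume (Icc (-1/3 - q) (-1/3 - p) ∪ Icc (-1/3 + p) (-1/3 + q)) :=
        measure_mono hincl
    _ ≤ volume (Icc (-1/3 - q) (-1/3 - p)) + volume (Icc (-1/3 + p) (-1/3 + q)) :=
        measure_union_le _ _
    _ = ENNReal.ofReal (q - p) + ENNReal.ofReal (q - p) := by
        rw [Real.volume_Icc, Real.volume_Icc]
        congr 1 <;> congr 1 <;> ring
    _ ≤ ENNReal.ofReal (Real.sqrt H) + ENNReal.ofReal (Real.sqrt H) := by
        gcongr <;> exact hqp
    _ = ENNReal.ofReal (2*Real.sqrt H) := by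
        rw [← ENNReal.ofReal_add (Real.sqrt_nonneg H) (Real.sqrt_nonneg H)]
        congr 1; ring

lemma main_bound (s : ℝ) (hs0 : 0 < s) (hs1 : s < 1) (ξ₁ τ₁ M : ℝ)
    (hM : M = 1 + |(-τ₁ + ξ₁^2)|) :
    ∫ ξ in {ξ : ℝ | |ξ^3 + (ξ - ξ₁)^2 - τ₁| ≤ 2*(M-1)},
      ξ^2 * (1 + |ξ^3 + (ξ - ξ₁)^2 - τ₁|)^(-s)
    ≤ (72/(1-s) + 8) * M^(1 - s/3) := by
  have hM1 : 1 ≤ M := by rw [hM]; linarith [abs_nonneg (-τ₁ + ξ₁^2)]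
  have hMpos : (0:ℝ) < M := by linarith
  -- notation
  obtain ⟨φ, hφ⟩ : ∃ φ : ℝ → ℝ, φ = fun ξ : ℝ => ξ^3 + (ξ - ξ₁)^2 - τ₁ := ⟨_, rfl⟩
  obtain ⟨Dv, hDv⟩ : ∃ Dv : ℝ → ℝ, Dv = fun ξ : ℝ => 3*ξ^2 + 2*(ξ - ξ₁) := ⟨_, rfl⟩
  have hd : ∀ ξ, HasDerivAt φ (Dv ξ) ξ := by rw [hφ, hDv]; exact phi_deriv ξ₁ τ₁
  have hφcont : Continuous φ := by rw [hφ]; continuity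
  have hDcont : Continuous Dv := by rw [hDv]; continuity
  obtain ⟨S, hSdef⟩ : ∃ S : Set ℝ, S = {ξ : ℝ | |φ ξ| ≤ 2*(M-1)} := ⟨_, rfl⟩
  have hSmeas : MeasurableSet S := by
    rw [hSdef]
    exact measurableSet_le (continuous_abs.comp hφcont).measurable measurable_const
  have hfnn : ∀ ξ : ℝ, 0 ≤ ξ^2 * (1 + |φ ξ|)^(-s) := by
    intro ξ; positivity
  have hfcont : Continuous (fun ξ : ℝ => ξ^2 * (1 + |φ ξ|)^(-s)) := by
    apply Continuous.mul (by continuity)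
    apply Continuous.rpow_const (by continuity)
    intro ξ; left; positivity
  -- constants
  obtain ⟨H, hH⟩ : ∃ H : ℝ, H = M^(2*(1-s)/3) := ⟨_, rfl⟩
  obtain ⟨W, hW⟩ : ∃ W : ℝ, W = 4*M^(2*s/3) := ⟨_, rfl⟩
  have hHpos : 0 < H := by rw [hH]; positivity
  have hH1 : 1 ≤ H := by rw [hH]; exact Real.one_le_rpow hM1 (by nlinarith)
  have hW1 : 1 ≤ W := by
    rw [hW]
    have : (1:ℝ) ≤ M^(2*s/3) := Real.one_le_rpow hM1 (by nlinarith)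
    linarith
  have hWpos : 0 < W := by linarith
  have hWH : W * H = 4*M^((2:ℝ)/3) := by
    rw [hW, hH, mul_assoc, ← Real.rpow_add hMpos]
    congr 1
    ring
  have hHM23 : H ≤ M^((2:ℝ)/3) := by
    rw [hH]
    apply Real.rpow_le_rpow_of_exponent_le hM1
    nlinarith
  -- pointwise bound on the good set
  have hpt : ∀ ξ, ξ ∈ S → (ξ^2 ≤ |Dv ξ| ∨ H ≤ |Dv ξ|) → ξ^2 ≤ W * |Dv ξ| := by
    intro ξ hξS hgood
    by_cases hc : ξ^2 ≤ |Dv ξ|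
    · calc ξ^2 ≤ |Dv ξ| := hc
        _ = 1 * |Dv ξ| := (one_mul _).symm
        _ ≤ W * |Dv ξ| := by
            apply mul_le_mul_of_nonneg_right hW1 (abs_nonneg _)
    · push_neg at hc
      have hbad : |Dv ξ| < ξ^2 := hc
      have hsq : ξ^2 ≤ 4*M^((2:ℝ)/3) := by
        apply badsq ξ₁ τ₁ M hM ξ
        · rw [hSdef] at hξS; simp only [hφ, mem_setOf_eq] at hξS; exact hξS
        · simp only [hDv] at hbad; exact hbad
      rcases hgood with h | h
      · exact absurd h (not_le.2 hbad)
      · calc ξ^2 ≤ 4*M^((2:ℝ)/3) := hsq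
          _ = W * H := hWH.symm
          _ ≤ W * |Dv ξ| := by gcongr
  -- pointwise bound on the small-derivative set
  have hpt2 : ∀ ξ, ξ ∈ S → |Dv ξ| < H → ξ^2 * (1 + |φ ξ|)^(-s) ≤ 4*M^((2:ℝ)/3) := by
    intro ξ hξS hsmall
    have h1 : (1 + |φ ξ|)^(-s) ≤ 1 := by
      apply Real.rpow_le_one_of_one_le_of_nonpos
      · linarith [abs_nonneg (φ ξ)]
      · linarith
    have h2 : ξ^2 ≤ 4*M^((2:ℝ)/3) := by
      by_cases hc : ξ^2 ≤ |Dv ξ|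
      · have : ξ^2 < H := lt_of_le_of_lt hc hsmall
        have h4 : (1:ℝ) ≤ M^((2:ℝ)/3) := Real.one_le_rpow hM1 (by norm_num)
        nlinarith
      · push_neg at hc
        apply badsq ξ₁ τ₁ M hM ξ
        · rw [hSdef] at hξS; simp only [hφ, mem_setOf_eq] at hξS; exact hξS
        · simp only [hDv] at hc; exact hc
    calc ξ^2 * (1 + |φ ξ|)^(-s) ≤ ξ^2 * 1 := by
          apply mul_le_mul_of_nonneg_left h1 (sq_nonneg ξ)
      _ = ξ^2 := mul_one _
      _ ≤ 4*M^((2:ℝ)/3) := h2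
  -- ENNReal-valued functions
  obtain ⟨g, hg⟩ : ∃ g : ℝ → ℝ≥0∞, g = fun u => ENNReal.ofReal ((1+|u|)^(-s)) := ⟨_, rfl⟩
  obtain ⟨Fn, hFn⟩ : ∃ Fn : ℝ → ℝ≥0∞,
      Fn = fun ξ => ENNReal.ofReal (ξ^2 * (1+|φ ξ|)^(-s)) := ⟨_, rfl⟩
  have hgmeas : Measurable g := by
    rw [hg]
    apply Measurable.ennreal_ofReal
    apply Continuous.measurable
    apply Continuous.rpow_const (by continuity)
    intro u; left; positivity
  have h1s : (0:ℝ) < 1 - s := by linarith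
  -- the u-integral bound
  have hJ : ∫⁻ u in Icc (-(2*M)) (2*M), g u ≤ ENNReal.ofReal (6*M^(1-s)/(1-s)) := by
    have h0 : ∫⁻ u in Icc (-(2*M)) (2*M), g u ≤ ENNReal.ofReal (2*(1+2*M)^(1-s)/(1-s)) := by
      rw [hg]; exact ubound s (2*M) hs0 hs1 (by linarith)
    refine h0.trans ?_
    apply ENNReal.ofReal_le_ofReal
    have h6 : 0 ≤ M^(1-s) := Real.rpow_nonneg (le_of_lt hMpos) _
    have h7 : (1+2*M)^(1-s) ≤ 3*M^(1-s) := by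
      have h3 : (1+2*M)^(1-s) ≤ (3*M)^(1-s) :=
        Real.rpow_le_rpow (by linarith) (by linarith) (by linarith)
      have h4 : (3*M)^(1-s) = 3^(1-s)*M^(1-s) := Real.mul_rpow (by norm_num) (le_of_lt hMpos)
      have h5 : (3:ℝ)^(1-s) ≤ 3 := by
        calc (3:ℝ)^(1-s) ≤ 3^(1:ℝ) :=
              Real.rpow_le_rpow_of_exponent_le (by norm_num) (by linarith)
          _ = 3 := Real.rpow_one 3
      nlinarith
    rw [div_le_div_iff₀ h1s h1s]
    nlinarith
  -- good set
  obtain ⟨GS, hGS⟩ : ∃ GS : Set ℝ, GS = {ξ : ℝ | ξ^2 ≤ |Dv ξ|} ∪ {ξ : ℝ | H ≤ |Dv ξ|} :=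
    ⟨_, rfl⟩
  have hGSmeas : MeasurableSet GS := by
    rw [hGS]
    exact (measurableSet_le (by continuity : Continuous fun ξ : ℝ => ξ^2).measurable
        hDcont.abs.measurable).union
      (measurableSet_le measurable_const hDcont.abs.measurable)
  have hGSmem : ∀ ξ, ξ ∈ GS ↔ (ξ^2 ≤ |Dv ξ| ∨ H ≤ |Dv ξ|) := by
    intro ξ; rw [hGS]; exact Iff.rfl
  -- bound on each injectivity piece
  have piece : ∀ P : Set ℝ, MeasurableSet P → InjOn φ P →
      ∫⁻ ξ in P ∩ (S ∩ GS), Fn ξ ≤ ENNReal.ofReal (W * (6*M^(1-s)/(1-s))) := by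
    intro P hPmeas hPinj
    have hTmeas : MeasurableSet (P ∩ (S ∩ GS)) := hPmeas.inter (hSmeas.inter hGSmeas)
    have hTinj : InjOn φ (P ∩ (S ∩ GS)) := hPinj.mono inter_subset_left
    have himg : φ '' (P ∩ (S ∩ GS)) ⊆ Icc (-(2*M)) (2*M) := by
      rintro u ⟨ξ, hξ, rfl⟩
      have hξS : ξ ∈ S := hξ.2.1
      rw [hSdef] at hξS
      have := hξS
      simp only [mem_setOf_eq] at this
      have habs : |φ ξ| ≤ 2*M := by linarith
      exact abs_le.1 habs
    calc ∫⁻ ξ in P ∩ (S ∩ GS), Fn ξ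
        ≤ ∫⁻ ξ in P ∩ (S ∩ GS), ENNReal.ofReal W * (ENNReal.ofReal |Dv ξ| * g (φ ξ)) := by
          apply setLIntegral_mono
          · exact (measurable_const.mul
              ((hDcont.abs.measurable.ennreal_ofReal).mul (hgmeas.comp hφcont.measurable)))
          · intro ξ hξ
            have hξS : ξ ∈ S := hξ.2.1
            have hξG : ξ^2 ≤ |Dv ξ| ∨ H ≤ |Dv ξ| := (hGSmem ξ).1 hξ.2.2
            have hsq := hpt ξ hξS hξG
            rw [hFn, hg]
            rw [← ENNReal.ofReal_mul (abs_nonneg (Dv ξ)), ← ENNReal.ofReal_mul (by linarith : (0:ℝ) ≤ W)]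
            apply ENNReal.ofReal_le_ofReal
            have hrnn : (0:ℝ) ≤ (1+|φ ξ|)^(-s) := Real.rpow_nonneg (by positivity) _
            calc ξ^2 * (1+|φ ξ|)^(-s) ≤ (W * |Dv ξ|) * (1+|φ ξ|)^(-s) :=
                  mul_le_mul_of_nonneg_right hsq hrnn
              _ = W * (|Dv ξ| * (1+|φ ξ|)^(-s)) := by ring
      _ = ENNReal.ofReal W * ∫⁻ ξ in P ∩ (S ∩ GS), ENNReal.ofReal |Dv ξ| * g (φ ξ) :=
            lintegral_const_mul' _ _ ENNReal.ofReal_ne_top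
      _ = ENNReal.ofReal W * ∫⁻ u in φ '' (P ∩ (S ∩ GS)), g u := by
            rw [cov hTmeas hd hTinj g]
      _ ≤ ENNReal.ofReal W * ∫⁻ u in Icc (-(2*M)) (2*M), g u :=
            mul_le_mul_right (lintegral_mono_set himg) _
      _ ≤ ENNReal.ofReal W * ENNReal.ofReal (6*M^(1-s)/(1-s)) := mul_le_mul_right hJ _
      _ = ENNReal.ofReal (W * (6*M^(1-s)/(1-s))) :=
            (ENNReal.ofReal_mul (by linarith : (0:ℝ) ≤ W)).symm
  -- covering by the three pieces
  obtain ⟨hinj1, hinj2, hinj3⟩ := inj_pieces ξ₁ τ₁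
  rw [← hφ] at hinj1 hinj2 hinj3
  obtain ⟨rm, hrm⟩ : ∃ rm : ℝ, rm = (-1 - Real.sqrt (max 0 (1+6*ξ₁)))/3 := ⟨_, rfl⟩
  obtain ⟨rp, hrp⟩ : ∃ rp : ℝ, rp = (-1 + Real.sqrt (max 0 (1+6*ξ₁)))/3 := ⟨_, rfl⟩
  rw [← hrm] at hinj1 hinj2
  rw [← hrp] at hinj2 hinj3
  have hrmrp : rm ≤ rp := by
    rw [hrm, hrp]
    have := Real.sqrt_nonneg (max 0 (1+6*ξ₁))
    linarith
  have hcoverP : ∀ ξ : ℝ, ξ ∈ Iic rm ∨ ξ ∈ Icc rm rp ∨ ξ ∈ Ici rp := by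
    intro ξ
    rcases le_or_gt ξ rm with h | h
    · exact Or.inl h
    · rcases le_or_gt ξ rp with h' | h'
      · exact Or.inr (Or.inl ⟨h.le, h'⟩)
      · exact Or.inr (Or.inr h'.le)
  have hE1 : ∫⁻ ξ in S ∩ GS, Fn ξ ≤
      ENNReal.ofReal (W * (6*M^(1-s)/(1-s))) + ENNReal.ofReal (W * (6*M^(1-s)/(1-s)))
        + ENNReal.ofReal (W * (6*M^(1-s)/(1-s))) := by
    have hsub : S ∩ GS ⊆ (Iic rm ∩ (S ∩ GS)) ∪ ((Icc rm rp ∩ (S ∩ GS)) ∪ (Ici rp ∩ (S ∩ GS))) := by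
      intro ξ hξ
      rcases hcoverP ξ with h | h | h
      · exact Or.inl ⟨h, hξ⟩
      · exact Or.inr (Or.inl ⟨h, hξ⟩)
      · exact Or.inr (Or.inr ⟨h, hξ⟩)
    calc ∫⁻ ξ in S ∩ GS, Fn ξ
        ≤ ∫⁻ ξ in (Iic rm ∩ (S ∩ GS)) ∪ ((Icc rm rp ∩ (S ∩ GS)) ∪ (Ici rp ∩ (S ∩ GS))), Fn ξ :=
          lintegral_mono_set hsub
      _ ≤ (∫⁻ ξ in Iic rm ∩ (S ∩ GS), Fn ξ) +
          ∫⁻ ξ in (Icc rm rp ∩ (S ∩ GS)) ∪ (Ici rp ∩ (S ∩ GS)), Fn ξ := lintegral_union_le _ _ _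
      _ ≤ (∫⁻ ξ in Iic rm ∩ (S ∩ GS), Fn ξ) +
          ((∫⁻ ξ in Icc rm rp ∩ (S ∩ GS), Fn ξ) + ∫⁻ ξ in Ici rp ∩ (S ∩ GS), Fn ξ) :=
          add_le_add_right (lintegral_union_le _ _ _) _
      _ ≤ ENNReal.ofReal (W * (6*M^(1-s)/(1-s))) + (ENNReal.ofReal (W * (6*M^(1-s)/(1-s)))
          + ENNReal.ofReal (W * (6*M^(1-s)/(1-s)))) := by
          gcongr
          · exact piece _ measurableSet_Iic hinj1
          · exact piece _ measurableSet_Icc hinj2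
          · exact piece _ measurableSet_Ici hinj3
      _ = _ := by ring
  -- bad set bound
  have hsqrtH : Real.sqrt H = M^((1-s)/3) := by
    rw [hH, Real.sqrt_eq_rpow, ← Real.rpow_mul (le_of_lt hMpos)]
    congr 1; ring
  have hE2 : ∫⁻ ξ in S ∩ {ξ : ℝ | |Dv ξ| < H}, Fn ξ ≤
      ENNReal.ofReal (8 * M^(1 - s/3)) := by
    calc ∫⁻ ξ in S ∩ {ξ : ℝ | |Dv ξ| < H}, Fn ξ
        ≤ ∫⁻ _ in S ∩ {ξ : ℝ | |Dv ξ| < H}, ENNReal.ofReal (4*M^((2:ℝ)/3)) := by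
          apply setLIntegral_mono measurable_const
          intro ξ hξ
          rw [hFn]
          exact ENNReal.ofReal_le_ofReal (hpt2 ξ hξ.1 hξ.2)
      _ = ENNReal.ofReal (4*M^((2:ℝ)/3)) * volume (S ∩ {ξ : ℝ | |Dv ξ| < H}) :=
          setLIntegral_const _ _
      _ ≤ ENNReal.ofReal (4*M^((2:ℝ)/3)) * ENNReal.ofReal (2*Real.sqrt H) := by
          apply mul_le_mul_right
          refine le_trans (measure_mono inter_subset_right) ?_
          have : {ξ : ℝ | |Dv ξ| < H} = {ξ : ℝ | |3*ξ^2 + 2*(ξ - ξ₁)| < H} := by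
            rw [hDv]
          rw [this]
          exact sublevel ξ₁ H (le_of_lt hHpos)
      _ = ENNReal.ofReal (8 * M^(1 - s/3)) := by
          rw [← ENNReal.ofReal_mul (by positivity)]
          congr 1
          rw [hsqrtH]
          have hmm : M^((2:ℝ)/3)*M^((1-s)/3) = M^(1-s/3) := by
            rw [← Real.rpow_add hMpos]; congr 1; ring
          linear_combination 8*hmm
  -- combine the two regions
  have hcover2 : S ⊆ (S ∩ GS) ∪ (S ∩ {ξ : ℝ | |Dv ξ| < H}) := by
    intro ξ hξ
    by_cases h : |Dv ξ| < H
    · exact Or.inr ⟨hξ, h⟩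
    · push_neg at h
      exact Or.inl ⟨hξ, (hGSmem ξ).2 (Or.inr h)⟩
  have htot : ∫⁻ ξ in S, Fn ξ ≤ ENNReal.ofReal ((72/(1-s) + 8) * M^(1 - s/3)) := by
    have hx : (0:ℝ) ≤ W * (6*M^(1-s)/(1-s)) := by
      apply mul_nonneg (by linarith)
      apply div_nonneg _ (le_of_lt h1s)
      positivity
    calc ∫⁻ ξ in S, Fn ξ
        ≤ ∫⁻ ξ in (S ∩ GS) ∪ (S ∩ {ξ : ℝ | |Dv ξ| < H}), Fn ξ := lintegral_mono_set hcover2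
      _ ≤ (∫⁻ ξ in S ∩ GS, Fn ξ) + ∫⁻ ξ in S ∩ {ξ : ℝ | |Dv ξ| < H}, Fn ξ :=
          lintegral_union_le _ _ _
      _ ≤ (ENNReal.ofReal (W * (6*M^(1-s)/(1-s))) + ENNReal.ofReal (W * (6*M^(1-s)/(1-s)))
            + ENNReal.ofReal (W * (6*M^(1-s)/(1-s)))) + ENNReal.ofReal (8 * M^(1 - s/3)) :=
          add_le_add hE1 hE2
      _ = ENNReal.ofReal ((W * (6*M^(1-s)/(1-s)) + W * (6*M^(1-s)/(1-s)))
            + W * (6*M^(1-s)/(1-s)) + 8 * M^(1 - s/3)) := by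
          rw [← ENNReal.ofReal_add hx hx, ← ENNReal.ofReal_add (by linarith) hx,
            ← ENNReal.ofReal_add (by linarith) (by positivity)]
      _ ≤ ENNReal.ofReal ((72/(1-s) + 8) * M^(1 - s/3)) := by
          apply ENNReal.ofReal_le_ofReal
          have hmm2 : M^(2*s/3)*M^(1-s) = M^(1-s/3) := by
            rw [← Real.rpow_add hMpos]; congr 1; ring
          have hXval : W * (6*M^(1-s)/(1-s)) = 24/(1-s) * M^(1-s/3) := by
            rw [hW]
            calc 4*M^(2*s/3) * (6*M^(1-s)/(1-s)) = 24*(M^(2*s/3)*M^(1-s))/(1-s) := by ring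
              _ = 24/(1-s) * M^(1-s/3) := by rw [hmm2]; ring
          rw [hXval]
          apply le_of_eq
          ring
  -- convert Bochner integral to lower integral
  have hseteq : {ξ : ℝ | |ξ^3 + (ξ - ξ₁)^2 - τ₁| ≤ 2*(M-1)} = S := by rw [hSdef, hφ]
  have hfun : (fun ξ : ℝ => ξ^2 * (1 + |ξ^3 + (ξ - ξ₁)^2 - τ₁|)^(-s))
      = fun ξ : ℝ => ξ^2 * (1 + |φ ξ|)^(-s) := by rw [hφ]
  rw [hseteq, hfun]
  rw [integral_eq_lintegral_of_nonneg_ae (Filter.Eventually.of_forall hfnn)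
    hfcont.aestronglyMeasurable.restrict]
  apply ENNReal.toReal_le_of_le_ofReal
  · apply mul_nonneg _ (Real.rpow_nonneg (le_of_lt hMpos) _)
    have : (0:ℝ) ≤ 72/(1-s) := div_nonneg (by norm_num) (le_of_lt h1s)
    linarith
  · simp only [hFn] at htot
    exact htot

/-- Region II estimate (after integrating out `τ`) in the proof of
`‖∂ₓ(g h̄)‖_{Y_{-a,1}} ≤ C‖g‖_{X_{b,1}}‖h‖_{X_{b,1}}`: for `a ∈ (1/4,1/2)`, `b ∈ (1/3,1/2)`
with `a + 2b > 4/3`, the sup over `(ξ₁,τ₁)` of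
`⟨-τ₁+ξ₁²⟩^{-b} (∫_{G(ξ₁,τ₁)} ξ² ⟨ξ³+(ξ-ξ₁)²-τ₁⟩^{-(2a+2b-1)} dξ)^{1/2}` is finite, where
`G(ξ₁,τ₁)` consists of `ξ` for which there exists `τ` with `⟨-τ₁+ξ₁²⟩ ≥ ⟨τ-ξ³⟩` and
`⟨-τ₁+ξ₁²⟩ ≥ ⟨τ-τ₁+(ξ-ξ₁)²⟩`. -/
theorem stmt9 (a b : ℝ) (ha : a ∈ Set.Ioo (1/4 : ℝ) (1/2)) (hb : b ∈ Set.Ioo (1/3 : ℝ) (1/2))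
    (hab : 4/3 < a + 2 * b) :
    ∃ C : ℝ, ∀ ξ₁ τ₁ : ℝ,
      jb (-τ₁ + ξ₁ ^ 2) ^ (-b) *
        (∫ ξ in {ξ : ℝ | ∃ τ : ℝ,
            jb (τ - ξ ^ 3) ≤ jb (-τ₁ + ξ₁ ^ 2) ∧
            jb (τ - τ₁ + (ξ - ξ₁) ^ 2) ≤ jb (-τ₁ + ξ₁ ^ 2)},
          ξ ^ 2 * jb (ξ ^ 3 + (ξ - ξ₁) ^ 2 - τ₁) ^ (-(2 * a + 2 * b - 1))) ^ (1/2 : ℝ)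
        ≤ C := by
  obtain ⟨ha1, ha2⟩ := ha
  obtain ⟨hb1, hb2⟩ := hb
  obtain ⟨s, hs⟩ : ∃ s : ℝ, s = 2*a+2*b-1 := ⟨_, rfl⟩
  have hs0 : 0 < s := by rw [hs]; linarith
  have hs1 : s < 1 := by rw [hs]; linarith
  have h1s : (0:ℝ) < 1 - s := by linarith
  obtain ⟨K, hK⟩ : ∃ K : ℝ, K = 72/(1-s)+8 := ⟨_, rfl⟩
  have hKpos : 0 < K := by
    rw [hK]
    have := div_nonneg (by norm_num : (0:ℝ) ≤ 72) (le_of_lt h1s)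
    linarith
  refine ⟨K^((1:ℝ)/2), ?_⟩
  intro ξ₁ τ₁
  obtain ⟨M, hM⟩ : ∃ M : ℝ, M = 1 + |(-τ₁ + ξ₁^2)| := ⟨_, rfl⟩
  have hM1 : 1 ≤ M := by rw [hM]; linarith [abs_nonneg (-τ₁+ξ₁^2)]
  have hMpos : (0:ℝ) < M := by linarith
  have hjb : jb (-τ₁ + ξ₁^2) = M := by rw [jb, hM]
  have hset : {ξ : ℝ | ∃ τ : ℝ, jb (τ - ξ^3) ≤ jb (-τ₁ + ξ₁^2) ∧
      jb (τ - τ₁ + (ξ - ξ₁)^2) ≤ jb (-τ₁ + ξ₁^2)}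
      = {ξ : ℝ | |ξ^3 + (ξ - ξ₁)^2 - τ₁| ≤ 2*(M-1)} := by
    ext ξ
    simp only [mem_setOf_eq, jb]
    constructor
    · rintro ⟨τ, h1, h2⟩
      have h1' : |τ - ξ^3| ≤ M - 1 := by rw [hM]; linarith
      have h2' : |τ - τ₁ + (ξ - ξ₁)^2| ≤ M - 1 := by rw [hM]; linarith
      have heq : ξ^3 + (ξ - ξ₁)^2 - τ₁ = (τ - τ₁ + (ξ - ξ₁)^2) - (τ - ξ^3) := by ring
      rw [heq]
      calc |(τ - τ₁ + (ξ - ξ₁)^2) - (τ - ξ^3)| ≤ |τ - τ₁ + (ξ - ξ₁)^2| + |τ - ξ^3| :=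
            abs_sub _ _
        _ ≤ 2*(M-1) := by linarith
    · intro h
      refine ⟨(ξ^3 + (τ₁ - (ξ - ξ₁)^2))/2, ?_, ?_⟩
      · have heq : (ξ^3 + (τ₁ - (ξ - ξ₁)^2))/2 - ξ^3 = -((ξ^3 + (ξ - ξ₁)^2 - τ₁)/2) := by ring
        rw [heq, abs_neg, abs_div, abs_two]
        rw [hM] at h
        linarith
      · have heq : (ξ^3 + (τ₁ - (ξ - ξ₁)^2))/2 - τ₁ + (ξ - ξ₁)^2
            = (ξ^3 + (ξ - ξ₁)^2 - τ₁)/2 := by ring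
        rw [heq, abs_div, abs_two]
        rw [hM] at h
        linarith
  have hexp : -(2 * a + 2 * b - 1) = -s := by rw [hs]
  simp only [jb] at *
  rw [hset, hjb, hexp]
  have hI := main_bound s hs0 hs1 ξ₁ τ₁ M hM
  rw [← hK] at hI
  have hint_nonneg : (0:ℝ) ≤ ∫ ξ in {ξ : ℝ | |ξ^3 + (ξ - ξ₁)^2 - τ₁| ≤ 2*(M-1)},
      ξ^2 * (1 + |ξ^3 + (ξ - ξ₁)^2 - τ₁|)^(-s) := by
    apply integral_nonneg
    intro ξ
    positivity
  have h12 : (∫ ξ in {ξ : ℝ | |ξ^3 + (ξ - ξ₁)^2 - τ₁| ≤ 2*(M-1)},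
      ξ^2 * (1 + |ξ^3 + (ξ - ξ₁)^2 - τ₁|)^(-s))^((1:ℝ)/2)
      ≤ (K * M^(1 - s/3))^((1:ℝ)/2) :=
    Real.rpow_le_rpow hint_nonneg hI (by norm_num)
  have hsplit : (K * M^(1 - s/3))^((1:ℝ)/2) = K^((1:ℝ)/2) * M^((1 - s/3)/2) := by
    rw [Real.mul_rpow (le_of_lt hKpos) (Real.rpow_nonneg (le_of_lt hMpos) _),
      ← Real.rpow_mul (le_of_lt hMpos)]
    congr 2
    ring
  have hfinal : M^(-b) * (K^((1:ℝ)/2) * M^((1 - s/3)/2)) ≤ K^((1:ℝ)/2) := by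
    have hMM : M^(-b) * M^((1 - s/3)/2) = M^(-b + (1 - s/3)/2) := (Real.rpow_add hMpos _ _).symm
    have hexp_nonpos : -b + (1 - s/3)/2 ≤ 0 := by rw [hs]; linarith
    have hMle : M^(-b + (1 - s/3)/2) ≤ 1 := Real.rpow_le_one_of_one_le_of_nonpos hM1 hexp_nonpos
    calc M^(-b) * (K^((1:ℝ)/2) * M^((1 - s/3)/2))
        = K^((1:ℝ)/2) * (M^(-b) * M^((1 - s/3)/2)) := by ring
      _ = K^((1:ℝ)/2) * M^(-b + (1 - s/3)/2) := by rw [hMM]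
      _ ≤ K^((1:ℝ)/2) * 1 :=
          mul_le_mul_of_nonneg_left hMle (Real.rpow_nonneg (le_of_lt hKpos) _)
      _ = K^((1:ℝ)/2) := mul_one _
  calc M^(-b) * (∫ ξ in {ξ : ℝ | |ξ^3 + (ξ - ξ₁)^2 - τ₁| ≤ 2*(M-1)},
        ξ^2 * (1 + |ξ^3 + (ξ - ξ₁)^2 - τ₁|)^(-s))^((1:ℝ)/2)
      ≤ M^(-b) * (K * M^(1 - s/3))^((1:ℝ)/2) :=
        mul_le_mul_of_nonneg_left h12 (Real.rpow_nonneg (le_of_lt hMpos) _)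
    _ = M^(-b) * (K^((1:ℝ)/2) * M^((1 - s/3)/2)) := by rw [hsplit]
    _ ≤ K^((1:ℝ)/2) := hfinal

end
end
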